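/- arXiv:2402.13603 — 5 statements merged into one kernel-verified Lean document; each statement's English description precedes it below -/
import Mathlib

section
/- (Source coding with RaS codes.) Let θ ∈ (0,1) with binary entropy H(θ) = −θ·log₂θ − (1−θ)·log₂(1−θ), and let k < n be positive integers with k·H(θ) < n−k. Then for every ε > 0 there exists an integer m₀ such that for all m ≥ m₀ there exist a matrix G of size (m+1)k × (m+1)(n−k) in the support of the RaS ensemble and a map ψ : F₂^{N−K} → F₂^K (where K = (m+1)k, N = (m+1)n) such that Pr{ψ(U·G) ≠ U} ≤ ε, where U ∈ F₂^K has i.i.d. Bernoulli(θ) components. -/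
open scoped Classical
open Finset


lemma zmod2_eq_one_of_ne_zero {x : ZMod 2} (h : x ≠ 0) : x = 1 := by
  revert h; revert x; decide

lemma card_dot_zero {M : ℕ} (v : Fin M → ZMod 2) (hv : v ≠ 0) :
    2 * (univ.filter fun c : Fin M → ZMod 2 => dotProduct v c = 0).card = 2 ^ M := by
  obtain ⟨i₀, hi₀⟩ : ∃ i, v i ≠ 0 := Function.ne_iff.mp hv
  have hvi : v i₀ = 1 := zmod2_eq_one_of_ne_zero hi₀
  have key : ∀ c : Fin M → ZMod 2,
      dotProduct v (c + Pi.single i₀ 1) = dotProduct v c + 1 := by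
    intro c
    rw [dotProduct_add]
    congr 1
    rw [dotProduct_single, hvi, one_mul]
  have hss : ∀ c : Fin M → ZMod 2, c + Pi.single i₀ 1 + Pi.single i₀ 1 = c := by
    intro c
    have : (Pi.single i₀ 1 : Fin M → ZMod 2) + Pi.single i₀ 1 = 0 := by
      ext j
      by_cases h : j = i₀ <;> simp [h, Pi.single_apply] <;> decide
    rw [add_assoc, this, add_zero]
  have hcard : (univ.filter fun c : Fin M → ZMod 2 => dotProduct v c = 0).card =
      (univ.filter fun c : Fin M → ZMod 2 => ¬ dotProduct v c = 0).card := by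
    apply Finset.card_bij (fun c _ => c + Pi.single i₀ 1)
    · intro c hc
      simp only [mem_filter, mem_univ, true_and] at hc ⊢
      rw [key, hc]; decide
    · intro a ha b hb hab
      have := congrArg (fun c => c + Pi.single i₀ 1) hab
      simpa [hss] using this
    · intro b hb
      simp only [mem_filter, mem_univ, true_and] at hb
      refine ⟨b + Pi.single i₀ 1, ?_, hss b⟩
      simp only [mem_filter, mem_univ, true_and]
      rw [key]
      rw [zmod2_eq_one_of_ne_zero hb]
      decide
  have h2 := Finset.card_filter_add_card_filter_not
    (s := (univ : Finset (Fin M → ZMod 2))) (p := fun c => dotProduct v c = 0)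
  rw [← hcard, card_univ] at h2
  have hc : Fintype.card (Fin M → ZMod 2) = 2 ^ M := by
    rw [Fintype.card_fun]; simp
  rw [hc] at h2
  omega

lemma card_vecMul_zero {M L : ℕ} (v : Fin M → ZMod 2) (hv : v ≠ 0) :
    (univ.filter fun G : Matrix (Fin M) (Fin L) (ZMod 2) => Matrix.vecMul v G = 0).card * 2 ^ L
      = 2 ^ (M * L) := by
  have h1 : (univ.filter fun G : Matrix (Fin M) (Fin L) (ZMod 2) =>
      Matrix.vecMul v G = 0).card
      = Fintype.card {G : Matrix (Fin M) (Fin L) (ZMod 2) // Matrix.vecMul v G = 0} := by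
    rw [Fintype.card_subtype]
  have E : {G : Matrix (Fin M) (Fin L) (ZMod 2) // Matrix.vecMul v G = 0}
      ≃ ((j : Fin L) → {c : Fin M → ZMod 2 // dotProduct v c = 0}) :=
    ⟨fun G j => ⟨fun i => G.1 i j, congrFun G.2 j⟩,
     fun f => ⟨Matrix.of fun i j => (f j).1 i, by funext j; exact (f j).2⟩,
     fun G => rfl, fun f => rfl⟩
  have h2 : Fintype.card {c : Fin M → ZMod 2 // dotProduct v c = 0}
      = (univ.filter fun c : Fin M → ZMod 2 => dotProduct v c = 0).card :=
    Fintype.card_subtype _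
  rw [h1, Fintype.card_congr E, Fintype.card_pi]
  rw [Finset.prod_const, h2, card_univ, Fintype.card_fin]
  rw [← mul_pow]
  rw [mul_comm ((univ.filter fun c : Fin M → ZMod 2 => dotProduct v c = 0).card) 2]
  rw [card_dot_zero v hv, ← pow_mul]

lemma min_one_le_rpow {x ρ : ℝ} (hx : 0 ≤ x) (hρ0 : 0 < ρ) (hρ1 : ρ ≤ 1) :
    min 1 x ≤ x ^ ρ := by
  rcases le_or_gt 1 x with h | h
  · calc min 1 x ≤ 1 := min_le_left _ _
      _ ≤ x ^ ρ := Real.one_le_rpow h hρ0.le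
  · rcases eq_or_lt_of_le hx with h0 | h0
    · rw [← h0, Real.zero_rpow hρ0.ne']
      simp
    · calc min 1 x ≤ x := min_le_right _ _
        _ = x ^ (1:ℝ) := (Real.rpow_one x).symm
        _ ≤ x ^ ρ := Real.rpow_le_rpow_of_exponent_ge h0 h.le hρ1

lemma exists_good_code (θ s : ℝ) (M L : ℕ)
    (hθ0 : 0 < θ) (hθ1 : θ < 1) (hs0 : 1/2 ≤ s) (hs1 : s < 1) :
    ∃ (G : Matrix (Fin M) (Fin L) (ZMod 2)) (ψ : (Fin L → ZMod 2) → (Fin M → ZMod 2)),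
      ∑ u : Fin M → ZMod 2, (∏ i, (if u i = 1 then θ else 1 - θ)) *
        (if ψ (Matrix.vecMul u G) ≠ u then (1:ℝ) else 0)
      ≤ (θ ^ s + (1 - θ) ^ s) ^ ((M:ℝ)/s) / (2:ℝ) ^ ((L:ℝ) * ((1-s)/s)) := by
  have hs0' : (0:ℝ) < s := lt_of_lt_of_le (by norm_num) hs0
  set ρ : ℝ := (1-s)/s with hρ
  have hρ0 : 0 < ρ := div_pos (by linarith) hs0'
  have hρ1 : ρ ≤ 1 := by
    rw [div_le_one hs0']; linarith
  set p : ZMod 2 → ℝ := fun x => if x = 1 then θ else 1 - θ with hp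
  have hppos : ∀ x, 0 < p x := by
    intro x; by_cases h : x = 1 <;> simp [hp, h] <;> linarith
  set w : (Fin M → ZMod 2) → ℝ := fun u => ∏ i, p (u i) with hwdef
  have hwpos : ∀ u, 0 < w u := fun u => Finset.prod_pos fun i _ => hppos _
  set A : ℝ := θ ^ s + (1 - θ) ^ s with hA
  have hApos : 0 < A := by
    have := Real.rpow_pos_of_pos hθ0 s
    have := Real.rpow_pos_of_pos (by linarith : (0:ℝ) < 1 - θ) s
    positivity
  -- the sum of p^s over ZMod 2
  have hpsum : ∑ x : ZMod 2, p x ^ s = A := by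
    have : (univ : Finset (ZMod 2)) = {0, 1} := by decide
    rw [this, Finset.sum_insert (by decide), Finset.sum_singleton]
    simp only [hp]
    norm_num
    rw [hA]; ring
  -- S := sum of w^s
  set S : ℝ := ∑ u : Fin M → ZMod 2, w u ^ s with hS
  have hSA : S = A ^ (M:ℕ) := by
    have h1 : ∀ u : Fin M → ZMod 2, w u ^ s = ∏ i, p (u i) ^ s := by
      intro u
      rw [hwdef]
      rw [← Real.finset_prod_rpow _ _ (fun i _ => (hppos (u i)).le)]
    have h2 : (∏ _i : Fin M, A) = ∑ u : Fin M → ZMod 2, ∏ i, p (u i) ^ s := by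
      calc (∏ _i : Fin M, A) = ∏ i : Fin M, ∑ x : ZMod 2, p x ^ s := by
            simp [hpsum]
        _ = ∑ f ∈ Fintype.piFinset (fun _ : Fin M => (univ : Finset (ZMod 2))),
              ∏ i, p (f i) ^ s := Finset.prod_univ_sum _ _
        _ = ∑ u : Fin M → ZMod 2, ∏ i, p (u i) ^ s := by
            rw [Fintype.piFinset_univ]
    rw [hS]
    simp only [h1]
    rw [← h2, Finset.prod_const, card_univ, Fintype.card_fin]
  have hSpos : 0 < S := by rw [hSA]; positivity
  -- counting matrices
  have hcardMat : ((univ : Finset (Matrix (Fin M) (Fin L) (ZMod 2))).card : ℝ)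
      = 2 ^ (M * L) := by
    rw [card_univ]
    rw [Fintype.card_congr (Matrix.of : (Fin M → Fin L → ZMod 2) ≃ _).symm]
    rw [Fintype.card_fun, Fintype.card_fun]
    push_cast
    rw [Fintype.card_fin, Fintype.card_fin]
    norm_num
    rw [← pow_mul, mul_comm L M]
  -- existence of max-likelihood decoders
  have hex : ∀ G : Matrix (Fin M) (Fin L) (ZMod 2),
      ∃ ψ : (Fin L → ZMod 2) → (Fin M → ZMod 2),
      ∀ u, Matrix.vecMul (ψ (Matrix.vecMul u G)) G = Matrix.vecMul u G ∧
        w u ≤ w (ψ (Matrix.vecMul u G)) := by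
    intro G
    have key : ∀ y : Fin L → ZMod 2, ∃ z : Fin M → ZMod 2,
        (∀ u, Matrix.vecMul u G = y → (Matrix.vecMul z G = y ∧ w u ≤ w z)) := by
      intro y
      by_cases h : (univ.filter fun u : Fin M → ZMod 2 => Matrix.vecMul u G = y).Nonempty
      · obtain ⟨z, hz, hmax⟩ := Finset.exists_max_image _ w h
        exact ⟨z, fun u hu => ⟨(Finset.mem_filter.mp hz).2,
          hmax u (Finset.mem_filter.mpr ⟨Finset.mem_univ _, hu⟩)⟩⟩
      · exact ⟨0, fun u hu =>
          absurd ⟨u, Finset.mem_filter.mpr ⟨Finset.mem_univ _, hu⟩⟩ h⟩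
    choose ψ hψ using key
    exact ⟨ψ, fun u => hψ _ u rfl⟩
  choose Ψ hΨ using hex
  -- the sets of "more likely" candidates
  set T : (Fin M → ZMod 2) → Finset (Fin M → ZMod 2) :=
    fun u => univ.filter (fun u' => u' ≠ u ∧ w u ≤ w u') with hT
  -- pointwise union bound
  have hub : ∀ (G) (u : Fin M → ZMod 2),
      (if Ψ G (Matrix.vecMul u G) ≠ u then (1:ℝ) else 0)
      ≤ ∑ u' ∈ T u, (if Matrix.vecMul u' G = Matrix.vecMul u G then (1:ℝ) else 0) := by
    intro G u
    by_cases h : Ψ G (Matrix.vecMul u G) ≠ u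
    · rw [if_pos h]
      obtain ⟨h1, h2⟩ := hΨ G u
      have hmem : Ψ G (Matrix.vecMul u G) ∈ T u :=
        Finset.mem_filter.mpr ⟨Finset.mem_univ _, h, h2⟩
      calc (1:ℝ) = (if Matrix.vecMul (Ψ G (Matrix.vecMul u G)) G = Matrix.vecMul u G
            then (1:ℝ) else 0) := by rw [if_pos h1]
        _ ≤ _ := Finset.single_le_sum (f := fun u' =>
            (if Matrix.vecMul u' G = Matrix.vecMul u G then (1:ℝ) else 0))
            (fun i _ => by positivity) hmem
    · rw [if_neg h]
      positivity
  -- pairwise collision counting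
  have hcount : ∀ u u' : Fin M → ZMod 2, u' ≠ u →
      ∑ G : Matrix (Fin M) (Fin L) (ZMod 2),
        (if Matrix.vecMul u' G = Matrix.vecMul u G then (1:ℝ) else 0)
      = 2 ^ (M*L) / 2 ^ L := by
    intro u u' hne
    rw [Finset.sum_boole]
    have heq : (univ.filter fun G : Matrix (Fin M) (Fin L) (ZMod 2) =>
        Matrix.vecMul u' G = Matrix.vecMul u G)
        = (univ.filter fun G : Matrix (Fin M) (Fin L) (ZMod 2) =>
          Matrix.vecMul (u' - u) G = 0) := by
      apply Finset.filter_congr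
      intro G _
      rw [Matrix.sub_vecMul, sub_eq_zero]
    rw [heq]
    have hc := card_vecMul_zero (u' - u) (sub_ne_zero.mpr hne) (L := L)
    have hc' : (((univ.filter fun G : Matrix (Fin M) (Fin L) (ZMod 2) =>
        Matrix.vecMul (u' - u) G = 0).card : ℝ)) * 2 ^ L = 2 ^ (M * L) := by
      exact_mod_cast congrArg (Nat.cast : ℕ → ℝ) hc
    rw [eq_div_iff (by positivity : ((2:ℝ)^L) ≠ 0)]
    exact hc'
  -- expected (summed) error for each source word
  have hEu : ∀ u : Fin M → ZMod 2,
      (∑ G : Matrix (Fin M) (Fin L) (ZMod 2),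
        (if Ψ G (Matrix.vecMul u G) ≠ u then (1:ℝ) else 0))
      ≤ 2 ^ (M*L) * min 1 (((T u).card : ℝ) / 2 ^ L) := by
    intro u
    have h1 : (∑ G : Matrix (Fin M) (Fin L) (ZMod 2),
        (if Ψ G (Matrix.vecMul u G) ≠ u then (1:ℝ) else 0)) ≤ 2 ^ (M*L) * 1 := by
      rw [mul_one, ← hcardMat]
      calc (∑ G : Matrix (Fin M) (Fin L) (ZMod 2),
          (if Ψ G (Matrix.vecMul u G) ≠ u then (1:ℝ) else 0))
          ≤ ∑ _G : Matrix (Fin M) (Fin L) (ZMod 2), (1:ℝ) :=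
          Finset.sum_le_sum (fun G _ => by split <;> norm_num)
        _ = _ := by rw [Finset.sum_const, nsmul_eq_mul, mul_one]
    have h2 : (∑ G : Matrix (Fin M) (Fin L) (ZMod 2),
        (if Ψ G (Matrix.vecMul u G) ≠ u then (1:ℝ) else 0))
        ≤ 2 ^ (M*L) * (((T u).card : ℝ) / 2 ^ L) := by
      calc (∑ G : Matrix (Fin M) (Fin L) (ZMod 2),
          (if Ψ G (Matrix.vecMul u G) ≠ u then (1:ℝ) else 0))
          ≤ ∑ G : Matrix (Fin M) (Fin L) (ZMod 2), ∑ u' ∈ T u,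
            (if Matrix.vecMul u' G = Matrix.vecMul u G then (1:ℝ) else 0) :=
          Finset.sum_le_sum (fun G _ => hub G u)
        _ = ∑ u' ∈ T u, ∑ G : Matrix (Fin M) (Fin L) (ZMod 2),
            (if Matrix.vecMul u' G = Matrix.vecMul u G then (1:ℝ) else 0) :=
          Finset.sum_comm
        _ = ∑ u' ∈ T u, (2:ℝ) ^ (M*L) / 2 ^ L := by
          apply Finset.sum_congr rfl
          intro u' hu'
          exact hcount u u' (Finset.mem_filter.mp hu').2.1
        _ = ((T u).card : ℝ) * ((2:ℝ) ^ (M*L) / 2 ^ L) := by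
          rw [Finset.sum_const, nsmul_eq_mul]
        _ = 2 ^ (M*L) * (((T u).card : ℝ) / 2 ^ L) := by ring
    rw [mul_min_of_nonneg _ _ (by positivity : (0:ℝ) ≤ 2^(M*L))]
    exact le_min h1 h2
  -- size of the candidate sets
  have hTcard : ∀ u : Fin M → ZMod 2, ((T u).card : ℝ) ≤ S / w u ^ s := by
    intro u
    rw [le_div_iff₀ (Real.rpow_pos_of_pos (hwpos u) s)]
    calc ((T u).card : ℝ) * w u ^ s = ∑ _u' ∈ T u, w u ^ s := by
          rw [Finset.sum_const, nsmul_eq_mul]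
      _ ≤ ∑ u' ∈ T u, w u' ^ s := by
          apply Finset.sum_le_sum
          intro u' hu'
          exact Real.rpow_le_rpow (hwpos u).le (Finset.mem_filter.mp hu').2.2 hs0'.le
      _ ≤ ∑ u' : Fin M → ZMod 2, w u' ^ s := by
          apply Finset.sum_le_sum_of_subset_of_nonneg (Finset.subset_univ _)
          intro u' _ _
          exact (Real.rpow_pos_of_pos (hwpos u') s).le
      _ = S := hS.symm
  -- per-word Gallager bound
  have hgal : ∀ u : Fin M → ZMod 2,
      min 1 (((T u).card : ℝ) / 2 ^ L) ≤ ((S / w u ^ s) / 2 ^ L) ^ ρ := by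
    intro u
    calc min 1 (((T u).card : ℝ) / 2 ^ L) ≤ (((T u).card : ℝ) / 2 ^ L) ^ ρ :=
          min_one_le_rpow (by positivity) hρ0 hρ1
      _ ≤ ((S / w u ^ s) / 2 ^ L) ^ ρ := by
          apply Real.rpow_le_rpow (by positivity)
          · apply div_le_div_of_nonneg_right (hTcard u) (by positivity)
          · exact hρ0.le
  -- algebraic identity
  have hident : ∀ u : Fin M → ZMod 2,
      w u * ((S / w u ^ s) / 2 ^ L) ^ ρ = w u ^ s * (S ^ ρ / ((2:ℝ) ^ L) ^ ρ) := by
    intro u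
    have ha := hwpos u
    have haps : (0:ℝ) < w u ^ s := Real.rpow_pos_of_pos ha s
    have h2L : (0:ℝ) < (2:ℝ) ^ L := by positivity
    rw [Real.div_rpow (by positivity) h2L.le, Real.div_rpow hSpos.le haps.le]
    have hsr : (w u ^ s) ^ ρ = w u ^ (1 - s) := by
      rw [← Real.rpow_mul ha.le]
      congr 1
      rw [hρ]
      field_simp
    have h1s : (0:ℝ) < w u ^ (1 - s) := Real.rpow_pos_of_pos ha _
    have hq : w u ^ s = w u / w u ^ (1-s) := by
      rw [eq_div_iff h1s.ne', ← Real.rpow_add ha]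
      rw [show s + (1-s) = (1:ℝ) by ring, Real.rpow_one]
    rw [hsr, hq]
    field_simp
  -- the total (averaged) error bound
  set B : ℝ := (θ ^ s + (1 - θ) ^ s) ^ ((M:ℝ)/s) / (2:ℝ) ^ ((L:ℝ) * ((1-s)/s)) with hB
  have hfinal : S * (S ^ ρ / ((2:ℝ) ^ L) ^ ρ) = B := by
    have h1 : S * S ^ ρ = S ^ ((1:ℝ) + ρ) := by
      rw [Real.rpow_add hSpos, Real.rpow_one]
    have h2 : S ^ ((1:ℝ) + ρ) = A ^ ((M:ℝ)/s) := by
      rw [hSA, ← Real.rpow_natCast A M, ← Real.rpow_mul hApos.le]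
      congr 1
      rw [hρ]
      field_simp
      ring
    have h3 : ((2:ℝ) ^ L) ^ ρ = (2:ℝ) ^ ((L:ℝ) * ((1-s)/s)) := by
      rw [← Real.rpow_natCast (2:ℝ) L, ← Real.rpow_mul (by norm_num : (0:ℝ) ≤ 2)]
    rw [mul_div_assoc', h1, h2, h3, hB, hA]
  have htot : ∑ G : Matrix (Fin M) (Fin L) (ZMod 2),
      (∑ u : Fin M → ZMod 2, w u * (if Ψ G (Matrix.vecMul u G) ≠ u then (1:ℝ) else 0))
      ≤ 2 ^ (M*L) * B := by
    calc ∑ G : Matrix (Fin M) (Fin L) (ZMod 2),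
        (∑ u : Fin M → ZMod 2, w u * (if Ψ G (Matrix.vecMul u G) ≠ u then (1:ℝ) else 0))
        = ∑ u : Fin M → ZMod 2, ∑ G : Matrix (Fin M) (Fin L) (ZMod 2),
          w u * (if Ψ G (Matrix.vecMul u G) ≠ u then (1:ℝ) else 0) := Finset.sum_comm
      _ = ∑ u : Fin M → ZMod 2, w u * ∑ G : Matrix (Fin M) (Fin L) (ZMod 2),
          (if Ψ G (Matrix.vecMul u G) ≠ u then (1:ℝ) else 0) := by
          apply Finset.sum_congr rfl
          intro u _
          rw [Finset.mul_sum]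
      _ ≤ ∑ u : Fin M → ZMod 2, w u * (2 ^ (M*L) * min 1 (((T u).card : ℝ) / 2 ^ L)) := by
          apply Finset.sum_le_sum
          intro u _
          exact mul_le_mul_of_nonneg_left (hEu u) (hwpos u).le
      _ ≤ ∑ u : Fin M → ZMod 2, w u * (2 ^ (M*L) * ((S / w u ^ s / 2 ^ L) ^ ρ)) := by
          apply Finset.sum_le_sum
          intro u _
          apply mul_le_mul_of_nonneg_left _ (hwpos u).le
          exact mul_le_mul_of_nonneg_left (hgal u) (by positivity)
      _ = 2 ^ (M*L) * ∑ u : Fin M → ZMod 2, w u * ((S / w u ^ s / 2 ^ L) ^ ρ) := by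
          rw [Finset.mul_sum]
          apply Finset.sum_congr rfl
          intro u _
          ring
      _ = 2 ^ (M*L) * ∑ u : Fin M → ZMod 2, w u ^ s * (S ^ ρ / ((2:ℝ) ^ L) ^ ρ) := by
          rw [Finset.sum_congr rfl (fun u _ => hident u)]
      _ = 2 ^ (M*L) * (S * (S ^ ρ / ((2:ℝ) ^ L) ^ ρ)) := by
          rw [← Finset.sum_mul, ← hS]
      _ = 2 ^ (M*L) * B := by rw [hfinal]
  have hne : (univ : Finset (Matrix (Fin M) (Fin L) (ZMod 2))).Nonempty :=
    ⟨0, Finset.mem_univ 0⟩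
  obtain ⟨G, -, hG⟩ := Finset.exists_le_of_sum_le
    (f := fun G : Matrix (Fin M) (Fin L) (ZMod 2) =>
      ∑ u : Fin M → ZMod 2, w u * (if Ψ G (Matrix.vecMul u G) ≠ u then (1:ℝ) else 0))
    (g := fun _ => B) hne (by
      calc _ ≤ 2 ^ (M*L) * B := htot
        _ = ∑ _G : Matrix (Fin M) (Fin L) (ZMod 2), B := by
            rw [Finset.sum_const, nsmul_eq_mul, hcardMat])
  exact ⟨G, Ψ G, hG⟩

section
open Filter Topology

lemma exists_good_s (θ R : ℝ) (hθ0 : 0 < θ) (hθ1 : θ < 1)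
    (hR : -θ * Real.logb 2 θ - (1-θ) * Real.logb 2 (1-θ) < R) :
    ∃ s : ℝ, 1/2 ≤ s ∧ s < 1 ∧ Real.logb 2 (θ ^ s + (1-θ) ^ s) < (1-s) * R := by
  have hθ1' : (0:ℝ) < 1 - θ := by linarith
  set φ : ℝ → ℝ := fun s => Real.logb 2 (θ ^ s + (1-θ) ^ s) with hφ
  set d : ℝ := (θ * Real.log θ + (1-θ) * Real.log (1-θ)) / Real.log 2 with hd
  -- derivative of φ at 1
  have hg : HasDerivAt (fun s : ℝ => θ ^ s + (1-θ) ^ s)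
      (θ * Real.log θ + (1-θ) * Real.log (1-θ)) 1 := by
    have h1 := (Real.hasStrictDerivAt_const_rpow hθ0 1).hasDerivAt
    have h2 := (Real.hasStrictDerivAt_const_rpow hθ1' 1).hasDerivAt
    have := h1.add h2
    rw [Real.rpow_one, Real.rpow_one] at this
    exact this
  have hg1 : θ ^ (1:ℝ) + (1-θ) ^ (1:ℝ) = 1 := by
    rw [Real.rpow_one, Real.rpow_one]; ring
  have hφd : HasDerivAt φ d 1 := by
    have hlog := hg.log (by rw [hg1]; norm_num)
    rw [hg1, div_one] at hlog
    have := hlog.div_const (Real.log 2)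
    simp only [hφ, Real.logb, hd]
    exact this
  have hdR : -R < d := by
    have : d = -(-θ * Real.logb 2 θ - (1-θ) * Real.logb 2 (1-θ)) := by
      rw [hd, Real.logb, Real.logb]
      field_simp
      ring
    rw [this]
    linarith
  have hslope := hasDerivAt_iff_tendsto_slope.mp hφd
  have hmono : 𝓝[Set.Ioo (1/2:ℝ) 1] 1 ≤ 𝓝[{(1:ℝ)}ᶜ] 1 := by
    apply nhdsWithin_mono
    intro x hx
    exact ne_of_lt hx.2
  have hslope' := hslope.mono_left hmono
  have hev : ∀ᶠ s in 𝓝[Set.Ioo (1/2:ℝ) 1] 1, -R < slope φ 1 s :=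
    hslope'.eventually (eventually_gt_nhds hdR)
  have hmem : ∀ᶠ s in 𝓝[Set.Ioo (1/2:ℝ) 1] 1, s ∈ Set.Ioo (1/2:ℝ) 1 :=
    eventually_mem_nhdsWithin
  have : NeBot (𝓝[Set.Ioo (1/2:ℝ) 1] (1:ℝ)) := right_nhdsWithin_Ioo_neBot (by norm_num)
  obtain ⟨s, hs1, hs2⟩ := (hev.and hmem).exists
  refine ⟨s, hs2.1.le, hs2.2, ?_⟩
  have hφ1 : φ 1 = 0 := by
    simp only [hφ]
    rw [hg1, Real.logb_one]
  have hsl : slope φ 1 s = φ s / (s - 1) := by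
    rw [slope_def_field, hφ1, sub_zero]
  rw [hsl] at hs1
  have hs10 : s - 1 < 0 := by linarith [hs2.2]
  have := (lt_div_iff_of_neg hs10).mp hs1
  calc φ s < -R * (s - 1) := this
    _ = (1-s) * R := by ring

end


lemma zmod2_psum (θ : ℝ) :
    ∑ x : ZMod 2, (if x = 1 then θ else 1 - θ) = 1 := by
  have h : (univ : Finset (ZMod 2)) = {0, 1} := by decide
  rw [h, Finset.sum_insert (by decide), Finset.sum_singleton]
  norm_num

lemma wsum_one (θ : ℝ) (M : ℕ) :
    ∑ v : Fin M → ZMod 2, (∏ i, (if v i = 1 then θ else 1 - θ)) = 1 := by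
  have h2 : (∏ _i : Fin M, (1:ℝ))
      = ∑ v : Fin M → ZMod 2, ∏ i, (if v i = 1 then θ else 1 - θ) := by
    calc (∏ _i : Fin M, (1:ℝ))
        = ∏ i : Fin M, ∑ x : ZMod 2, (if x = 1 then θ else 1 - θ) := by
          simp [zmod2_psum θ]
      _ = ∑ f ∈ Fintype.piFinset (fun _ : Fin M => (univ : Finset (ZMod 2))),
            ∏ i, (if f i = 1 then θ else 1 - θ) := Finset.prod_univ_sum _ _
      _ = _ := by rw [Fintype.piFinset_univ]
  rw [← h2, Finset.prod_const_one]

/-- Marginalizing an iid product over `Fin M × Fin k` onto the stream at column `a₀`. -/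
lemma marginal_stream (θ : ℝ) (M k : ℕ) (a₀ : Fin k)
    (F : (Fin M → ZMod 2) → ℝ) :
    ∑ u : Fin M × Fin k → ZMod 2,
        (∏ r, (if u r = 1 then θ else 1 - θ)) * F (fun i => u (i, a₀))
      = ∑ v : Fin M → ZMod 2, (∏ i, (if v i = 1 then θ else 1 - θ)) * F v := by
  set w : (Fin M → ZMod 2) → ℝ := fun v => ∏ i, (if v i = 1 then θ else 1 - θ) with hw
  -- reindex by currying
  let e : ((Fin M × Fin k) → ZMod 2) ≃ (Fin k → (Fin M → ZMod 2)) :=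
    ⟨fun u a i => u (i, a), fun f r => f r.2 r.1, fun u => rfl, fun f => rfl⟩
  have h1 : ∑ u : Fin M × Fin k → ZMod 2,
        (∏ r, (if u r = 1 then θ else 1 - θ)) * F (fun i => u (i, a₀))
      = ∑ f : Fin k → (Fin M → ZMod 2), (∏ a, w (f a)) * F (f a₀) := by
    rw [← Equiv.sum_comp e.symm (fun u => _)]
    apply Finset.sum_congr rfl
    intro f _
    show (∏ r : Fin M × Fin k, (if f r.2 r.1 = 1 then θ else 1 - θ)) * F (f a₀)
      = (∏ a, w (f a)) * F (f a₀)
    congr 1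
    calc ∏ r : Fin M × Fin k, (if f r.2 r.1 = 1 then θ else 1 - θ)
        = ∏ i : Fin M, ∏ a : Fin k, (if f a i = 1 then θ else 1 - θ) :=
          Fintype.prod_prod_type _
      _ = ∏ a : Fin k, ∏ i : Fin M, (if f a i = 1 then θ else 1 - θ) :=
          Finset.prod_comm
  rw [h1]
  set Gf : Fin k → (Fin M → ZMod 2) → ℝ :=
    fun a v => if a = a₀ then w v * F v else w v with hGf
  have key : ∀ f : Fin k → (Fin M → ZMod 2),
      (∏ a, Gf a (f a)) = (∏ a, w (f a)) * F (f a₀) := by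
    intro f
    rw [← Finset.mul_prod_erase univ (fun a => Gf a (f a)) (mem_univ a₀),
        ← Finset.mul_prod_erase univ (fun a => w (f a)) (mem_univ a₀)]
    have h0 : Gf a₀ (f a₀) = w (f a₀) * F (f a₀) := if_pos rfl
    have hrest : ∏ a ∈ univ.erase a₀, Gf a (f a) = ∏ a ∈ univ.erase a₀, w (f a) :=
      Finset.prod_congr rfl (fun a ha => if_neg (Finset.ne_of_mem_erase ha))
    rw [h0, hrest]
    ring
  calc ∑ f : Fin k → (Fin M → ZMod 2), (∏ a, w (f a)) * F (f a₀)
      = ∑ f : Fin k → (Fin M → ZMod 2), ∏ a, Gf a (f a) :=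
        Finset.sum_congr rfl fun f _ => (key f).symm
    _ = ∑ f ∈ Fintype.piFinset (fun _ : Fin k => (univ : Finset (Fin M → ZMod 2))),
          ∏ a, Gf a (f a) := by rw [Fintype.piFinset_univ]
    _ = ∏ a : Fin k, ∑ v : Fin M → ZMod 2, Gf a v := (Finset.prod_univ_sum _ _).symm
    _ = ∑ v : Fin M → ZMod 2, w v * F v := by
        rw [← Finset.mul_prod_erase univ (fun a => ∑ v : Fin M → ZMod 2, Gf a v)
          (mem_univ a₀)]
        have h0 : ∑ v : Fin M → ZMod 2, Gf a₀ v = ∑ v : Fin M → ZMod 2, w v * F v :=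
          Finset.sum_congr rfl fun v _ => if_pos rfl
        have hrest : ∏ a ∈ univ.erase a₀, (∑ v : Fin M → ZMod 2, Gf a v) = 1 := by
          apply Finset.prod_eq_one
          intro a ha
          rw [Finset.sum_congr rfl (fun v _ => if_neg (Finset.ne_of_mem_erase ha))]
          exact wsum_one θ M
        rw [h0, hrest, mul_one]

lemma exists_good_RaS (θ s : ℝ) (k nk M : ℕ)
    (hθ0 : 0 < θ) (hθ1 : θ < 1) (hs0 : 1/2 ≤ s) (hs1 : s < 1) (hk : 0 < k) :
    ∃ (G : Matrix (Fin M × Fin k) (Fin M × Fin nk) (ZMod 2))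
      (ψ : ((Fin M × Fin nk) → ZMod 2) → ((Fin M × Fin k) → ZMod 2)),
      (∀ (i j : Fin M) (b : Fin nk),
        (Finset.univ.filter (fun a : Fin k => G (i, a) (j, b) = 1)).card ≤ 1) ∧
      ∑ u : (Fin M × Fin k) → ZMod 2,
        ((∏ r, (if u r = 1 then θ else 1 - θ)) *
          (if ψ (Matrix.vecMul u G) ≠ u then (1:ℝ) else 0))
      ≤ (k:ℝ) * ((θ ^ s + (1 - θ) ^ s) ^ ((M:ℝ)/s)
          / (2:ℝ) ^ (((M * nk / k : ℕ):ℝ) * ((1-s)/s))) := by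
  set L : ℕ := M * nk / k with hL
  obtain ⟨G₀, ψ₀, hG₀⟩ := exists_good_code θ s M L hθ0 hθ1 hs0 hs1
  have hkL : k * L ≤ M * nk := by
    rw [hL, mul_comm]
    exact Nat.div_mul_le_self _ _
  -- the embedding of stream coordinates into the global output coordinates
  set ι : Fin k × Fin L → Fin M × Fin nk :=
    fun q => finProdFinEquiv.symm (Fin.castLE hkL (finProdFinEquiv q)) with hι
  have hι_inj : Function.Injective ι := by
    intro q q' h
    apply finProdFinEquiv.injective
    apply Fin.castLE_injective hkL
    exact finProdFinEquiv.symm.injective h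
  -- the global matrix and decompressor
  set G : Matrix (Fin M × Fin k) (Fin M × Fin nk) (ZMod 2) :=
    Matrix.of fun r c => ∑ l : Fin L, if ι (r.2, l) = c then G₀ r.1 l else 0 with hG
  set ψ : ((Fin M × Fin nk) → ZMod 2) → ((Fin M × Fin k) → ZMod 2) :=
    fun y r => ψ₀ (fun l => y (ι (r.2, l))) r.1 with hψ
  refine ⟨G, ψ, ?_, ?_⟩
  · -- block column weights ≤ 1
    intro i j b
    rw [Finset.card_le_one]
    have hex : ∀ a : Fin k, G (i, a) (j, b) = 1 → ∃ l, ι (a, l) = (j, b) := by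
      intro a h1
      by_contra hno
      push_neg at hno
      have h0 : G (i, a) (j, b) = 0 := by
        rw [hG]
        show (∑ l : Fin L, if ι (a, l) = (j, b) then G₀ i l else 0) = 0
        exact Finset.sum_eq_zero (fun l _ => if_neg (hno l))
      rw [h0] at h1
      exact (by decide : (0:ZMod 2) ≠ 1) h1
    intro a ha a' ha'
    obtain ⟨l, hl⟩ := hex a (Finset.mem_filter.mp ha).2
    obtain ⟨l', hl'⟩ := hex a' (Finset.mem_filter.mp ha').2
    have := hι_inj (hl.trans hl'.symm)
    exact congrArg Prod.fst this
  · -- error probability bound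
    -- key: restricted to the embedded coordinates, uG computes the stream encodings
    have hkey : ∀ (u : (Fin M × Fin k) → ZMod 2) (a₀ : Fin k) (l₀ : Fin L),
        Matrix.vecMul u G (ι (a₀, l₀))
          = Matrix.vecMul (fun i => u (i, a₀)) G₀ l₀ := by
      intro u a₀ l₀
      show ∑ r : Fin M × Fin k, u r * G r (ι (a₀, l₀)) = ∑ i, u (i, a₀) * G₀ i l₀
      have hinner : ∀ r : Fin M × Fin k,
          G r (ι (a₀, l₀)) = if r.2 = a₀ then G₀ r.1 l₀ else 0 := by
        intro r
        rw [hG]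
        show (∑ l : Fin L, if ι (r.2, l) = ι (a₀, l₀) then G₀ r.1 l else 0) = _
        by_cases hra : r.2 = a₀
        · rw [if_pos hra]
          have hiff : ∀ l : Fin L, (ι (r.2, l) = ι (a₀, l₀)) ↔ l = l₀ := by
            intro l
            constructor
            · intro h
              have h2 := hι_inj h
              exact congrArg Prod.snd h2
            · intro h
              rw [hra, h]
          calc (∑ l : Fin L, if ι (r.2, l) = ι (a₀, l₀) then G₀ r.1 l else 0)
              = ∑ l : Fin L, if l = l₀ then G₀ r.1 l else 0 :=
                Finset.sum_congr rfl (fun l _ => by rw [if_congr (hiff l) rfl rfl])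
            _ = G₀ r.1 l₀ := by rw [Finset.sum_ite_eq' univ l₀ (fun l => G₀ r.1 l),
                if_pos (Finset.mem_univ _)]
        · rw [if_neg hra]
          apply Finset.sum_eq_zero
          intro l _
          apply if_neg
          intro h
          exact hra (congrArg Prod.fst (hι_inj h) : _)
      calc ∑ r : Fin M × Fin k, u r * G r (ι (a₀, l₀))
          = ∑ r : Fin M × Fin k, u r * (if r.2 = a₀ then G₀ r.1 l₀ else 0) :=
            Finset.sum_congr rfl (fun r _ => by rw [hinner r])
        _ = ∑ i : Fin M, ∑ a : Fin k, u (i, a) * (if a = a₀ then G₀ i l₀ else 0) :=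
            Fintype.sum_prod_type _
        _ = ∑ i : Fin M, u (i, a₀) * G₀ i l₀ := by
            apply Finset.sum_congr rfl
            intro i _
            simp [mul_ite, Finset.sum_ite_eq']
    -- per-word union bound over the k streams
    have hub : ∀ u : (Fin M × Fin k) → ZMod 2,
        (if ψ (Matrix.vecMul u G) ≠ u then (1:ℝ) else 0)
        ≤ ∑ a : Fin k, (if ψ₀ (Matrix.vecMul (fun i => u (i, a)) G₀)
            ≠ (fun i => u (i, a)) then (1:ℝ) else 0) := by
      intro u
      by_cases h : ψ (Matrix.vecMul u G) ≠ u
      · rw [if_pos h]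
        have hstream : ∀ r : Fin M × Fin k, ψ (Matrix.vecMul u G) r
            = ψ₀ (Matrix.vecMul (fun i => u (i, r.2)) G₀) r.1 := by
          intro r
          rw [hψ]
          show ψ₀ (fun l => Matrix.vecMul u G (ι (r.2, l))) r.1 = _
          congr 1
          funext l
          exact hkey u r.2 l
        obtain ⟨r, hr⟩ := Function.ne_iff.mp h
        have herr : ψ₀ (Matrix.vecMul (fun i => u (i, r.2)) G₀)
            ≠ (fun i => u (i, r.2)) := by
          intro heq
          apply hr
          rw [hstream r, heq]
        calc (1:ℝ) = (if ψ₀ (Matrix.vecMul (fun i => u (i, r.2)) G₀)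
              ≠ (fun i => u (i, r.2)) then (1:ℝ) else 0) := by rw [if_pos herr]
          _ ≤ _ := Finset.single_le_sum (f := fun a =>
              (if ψ₀ (Matrix.vecMul (fun i => u (i, a)) G₀)
                ≠ (fun i => u (i, a)) then (1:ℝ) else 0))
              (fun a _ => by positivity) (Finset.mem_univ r.2)
      · rw [if_neg h]
        positivity
    -- summing up
    have hwnn : ∀ u : (Fin M × Fin k) → ZMod 2,
        (0:ℝ) ≤ ∏ r, (if u r = 1 then θ else 1 - θ) := by
      intro u
      apply Finset.prod_nonneg
      intro r _
      split <;> linarith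
    calc ∑ u : (Fin M × Fin k) → ZMod 2,
        ((∏ r, (if u r = 1 then θ else 1 - θ)) *
          (if ψ (Matrix.vecMul u G) ≠ u then (1:ℝ) else 0))
        ≤ ∑ u : (Fin M × Fin k) → ZMod 2,
          ((∏ r, (if u r = 1 then θ else 1 - θ)) *
            ∑ a : Fin k, (if ψ₀ (Matrix.vecMul (fun i => u (i, a)) G₀)
              ≠ (fun i => u (i, a)) then (1:ℝ) else 0)) :=
          Finset.sum_le_sum (fun u _ => mul_le_mul_of_nonneg_left (hub u) (hwnn u))
      _ = ∑ a : Fin k, ∑ u : (Fin M × Fin k) → ZMod 2,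
          ((∏ r, (if u r = 1 then θ else 1 - θ)) *
            (if ψ₀ (Matrix.vecMul (fun i => u (i, a)) G₀)
              ≠ (fun i => u (i, a)) then (1:ℝ) else 0)) := by
          rw [Finset.sum_congr rfl (fun u _ => Finset.mul_sum _ _ _)]
          exact Finset.sum_comm
      _ = ∑ a : Fin k, ∑ v : Fin M → ZMod 2,
          ((∏ i, (if v i = 1 then θ else 1 - θ)) *
            (if ψ₀ (Matrix.vecMul v G₀) ≠ v then (1:ℝ) else 0)) := by
          apply Finset.sum_congr rfl
          intro a _
          exact marginal_stream θ M k a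
            (fun v => if ψ₀ (Matrix.vecMul v G₀) ≠ v then (1:ℝ) else 0)
      _ ≤ ∑ _a : Fin k, ((θ ^ s + (1 - θ) ^ s) ^ ((M:ℝ)/s)
            / (2:ℝ) ^ ((L:ℝ) * ((1-s)/s))) :=
          Finset.sum_le_sum (fun a _ => hG₀)
      _ = (k:ℝ) * ((θ ^ s + (1 - θ) ^ s) ^ ((M:ℝ)/s)
            / (2:ℝ) ^ (((M * nk / k : ℕ):ℝ) * ((1-s)/s))) := by
          rw [Finset.sum_const, nsmul_eq_mul, card_univ, Fintype.card_fin, hL]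

/-- **Source coding with RaS codes.**
If `k·H(θ) < n−k` (where `H(θ)` is the binary entropy), then for every `ε > 0` there is
`m₀` such that for all `m ≥ m₀` some matrix `G` in the support of the RaS ensemble
(every column of every `k×(n−k)` block has Hamming weight at most 1) together with some
decompressor `ψ` satisfies `Pr{ψ(U·G) ≠ U} ≤ ε`, where `U ∈ F₂^K` has i.i.d.
Bernoulli(θ) components, `K = (m+1)k`. -/
theorem RaS_source_coding_theorem
    (θ : ℝ) (hθ0 : 0 < θ) (hθ1 : θ < 1)
    (k n : ℕ) (hk : 0 < k) (hkn : k < n)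
    (hrate : (k : ℝ) * (-θ * Real.logb 2 θ - (1 - θ) * Real.logb 2 (1 - θ))
      < (n : ℝ) - k)
    (ε : ℝ) (hε : 0 < ε) :
    ∃ m₀ : ℕ, ∀ m ≥ m₀,
      ∃ (G : Matrix (Fin (m + 1) × Fin k) (Fin (m + 1) × Fin (n - k)) (ZMod 2))
        (ψ : ((Fin (m + 1) × Fin (n - k)) → ZMod 2) → ((Fin (m + 1) × Fin k) → ZMod 2)),
        -- G lies in the support of the RaS ensemble
        (∀ (i j : Fin (m + 1)) (b : Fin (n - k)),
          (Finset.univ.filter (fun a : Fin k => G (i, a) (j, b) = 1)).card ≤ 1) ∧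
        -- error probability of the compression scheme is at most ε
        ∑ u : (Fin (m + 1) × Fin k) → ZMod 2,
          ((∏ i, (if u i = 1 then θ else 1 - θ)) *
            (if ψ (Matrix.vecMul u G) ≠ u then 1 else 0)) ≤ ε := by
  have hk' : (0:ℝ) < k := by exact_mod_cast hk
  set R : ℝ := ((n:ℝ) - k) / k with hR
  have hHR : -θ * Real.logb 2 θ - (1 - θ) * Real.logb 2 (1 - θ) < R := by
    rw [hR, lt_div_iff₀ hk']
    nlinarith [hrate]
  obtain ⟨s, hs0, hs1, hφ⟩ := exists_good_s θ R hθ0 hθ1 hHR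
  have hs0' : (0:ℝ) < s := by linarith
  have hApos : (0:ℝ) < θ ^ s + (1 - θ) ^ s := by
    have h1 := Real.rpow_pos_of_pos hθ0 s
    have h2 := Real.rpow_pos_of_pos (show (0:ℝ) < 1 - θ by linarith) s
    positivity
  set τ : ℝ := (1 - s)/s with hτ
  have hτ0 : 0 < τ := div_pos (by linarith) hs0'
  set c : ℝ := (θ ^ s + (1 - θ) ^ s) ^ ((1:ℝ)/s) * (2:ℝ) ^ (-(R * τ)) with hc
  have hc0 : 0 ≤ c := by positivity
  have hc1 : c < 1 := by
    have hA2 : θ ^ s + (1 - θ) ^ s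
        = (2:ℝ) ^ (Real.logb 2 (θ ^ s + (1 - θ) ^ s)) :=
      (Real.rpow_logb two_pos (by norm_num) hApos).symm
    have e3 : c = (2:ℝ) ^ (Real.logb 2 (θ ^ s + (1 - θ) ^ s) * (1/s) + (-(R*τ))) := by
      rw [Real.rpow_add two_pos, hc]
      congr 1
      calc (θ ^ s + (1 - θ) ^ s) ^ ((1:ℝ)/s)
          = ((2:ℝ) ^ (Real.logb 2 (θ ^ s + (1 - θ) ^ s))) ^ ((1:ℝ)/s) := by rw [← hA2]
        _ = (2:ℝ) ^ (Real.logb 2 (θ ^ s + (1 - θ) ^ s) * (1/s)) :=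
          (Real.rpow_mul (by norm_num) _ _).symm
    rw [e3]
    apply Real.rpow_lt_one_of_one_lt_of_neg one_lt_two
    have heq : Real.logb 2 (θ ^ s + (1 - θ) ^ s) * (1/s) + (-(R*τ))
        = (Real.logb 2 (θ ^ s + (1 - θ) ^ s) - (1-s)*R)/s := by
      rw [hτ]
      field_simp
      ring
    rw [heq]
    exact div_neg_of_neg_of_pos (by linarith [hφ]) hs0'
  set D : ℝ := (k:ℝ) * (2:ℝ) ^ τ with hD
  have hD0 : 0 ≤ D := by positivity
  have hten : Filter.Tendsto (fun m : ℕ => (D * c) * c ^ m) Filter.atTop (nhds 0) := by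
    have h0 : Filter.Tendsto (fun m : ℕ => c ^ m) Filter.atTop (nhds 0) :=
      tendsto_pow_atTop_nhds_zero_of_lt_one hc0 hc1
    have := h0.const_mul (D * c)
    rwa [mul_zero] at this
  have hev : ∀ᶠ m in Filter.atTop, (D * c) * c ^ m < ε :=
    hten.eventually (eventually_lt_nhds hε)
  obtain ⟨m₀, hm₀⟩ := Filter.eventually_atTop.mp hev
  refine ⟨m₀, fun m hm => ?_⟩
  obtain ⟨G, ψ, hblock, herr⟩ :=
    exists_good_RaS θ s k (n - k) (m+1) hθ0 hθ1 hs0 hs1 hk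
  refine ⟨G, ψ, hblock, herr.trans ?_⟩
  rw [← hτ] at herr ⊢
  set L : ℕ := (m + 1) * (n - k) / k with hLdef
  -- lower bound on L
  have hnat : (m + 1) * (n - k) < (L + 1) * k := by
    have h1 : k * L + (m + 1) * (n - k) % k = (m + 1) * (n - k) := by
      rw [hLdef]
      exact Nat.div_add_mod _ _
    have h2 := Nat.mod_lt ((m + 1) * (n - k)) hk
    calc (m + 1) * (n - k) = k * L + (m + 1) * (n - k) % k := h1.symm
      _ < k * L + k := by omega
      _ = (L + 1) * k := by ring
  have hcastlt : (((m+1:ℕ)):ℝ) * ((n:ℝ) - k) < ((L:ℝ) + 1) * k := by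
    have h3 : (((m + 1) * (n - k) : ℕ):ℝ) < (((L+1) * k : ℕ):ℝ) := Nat.cast_lt.mpr hnat
    push_cast [Nat.cast_sub hkn.le] at h3
    push_cast
    linarith
  have hL_lb : (((m+1:ℕ)):ℝ) * R - 1 ≤ (L:ℝ) := by
    have h4 : (((m+1:ℕ)):ℝ) * R < (L:ℝ) + 1 := by
      rw [hR, mul_div_assoc']
      rw [div_lt_iff₀ hk']
      linarith
    linarith
  have h2mono : (2:ℝ) ^ (-((L:ℝ) * τ)) ≤ (2:ℝ) ^ (-(((((m+1:ℕ)):ℝ) * R - 1) * τ)) := by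
    apply Real.rpow_le_rpow_of_exponent_le one_le_two
    nlinarith [hτ0.le, hL_lb]
  have hident : (θ ^ s + (1 - θ) ^ s) ^ ((((m+1:ℕ)):ℝ)/s)
        * (2:ℝ) ^ (-(((((m+1:ℕ)):ℝ) * R - 1) * τ))
      = (2:ℝ) ^ τ * c ^ (m+1) := by
    have e1 : (θ ^ s + (1 - θ) ^ s) ^ ((((m+1:ℕ)):ℝ)/s)
        = ((θ ^ s + (1 - θ) ^ s) ^ ((1:ℝ)/s)) ^ ((m+1:ℕ)) := by
      rw [← Real.rpow_natCast ((θ ^ s + (1 - θ) ^ s) ^ ((1:ℝ)/s)) (m+1),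
        ← Real.rpow_mul hApos.le]
      congr 1
      ring
    have e2 : (2:ℝ) ^ (-(((((m+1:ℕ)):ℝ) * R - 1) * τ))
        = (2:ℝ) ^ τ * ((2:ℝ) ^ (-(R * τ))) ^ ((m+1:ℕ)) := by
      rw [← Real.rpow_natCast ((2:ℝ) ^ (-(R * τ))) (m+1),
        ← Real.rpow_mul (by norm_num : (0:ℝ) ≤ 2), ← Real.rpow_add two_pos]
      congr 1
      ring
    rw [e1, e2, hc, mul_pow]
    ring
  calc (k:ℝ) * ((θ ^ s + (1 - θ) ^ s) ^ ((((m+1:ℕ)):ℝ)/s) / (2:ℝ) ^ ((L:ℝ) * τ))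
      = (k:ℝ) * ((θ ^ s + (1 - θ) ^ s) ^ ((((m+1:ℕ)):ℝ)/s)
          * (2:ℝ) ^ (-((L:ℝ) * τ))) := by
        rw [Real.rpow_neg (by norm_num : (0:ℝ) ≤ 2), div_eq_mul_inv]
    _ ≤ (k:ℝ) * ((θ ^ s + (1 - θ) ^ s) ^ ((((m+1:ℕ)):ℝ)/s)
          * (2:ℝ) ^ (-(((((m+1:ℕ)):ℝ) * R - 1) * τ))) := by
        apply mul_le_mul_of_nonneg_left _ hk'.le
        exact mul_le_mul_of_nonneg_left h2mono (Real.rpow_nonneg hApos.le _)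
    _ = (k:ℝ) * ((2:ℝ) ^ τ * c ^ (m+1)) := by rw [hident]
    _ = (D * c) * c ^ m := by
        rw [hD, pow_succ]
        ring
    _ ≤ ε := (hm₀ m hm).le
end

section
/- (The parity-check code ensemble associated with the RaS ensemble achieves capacity.) Let a BIOS memoryless channel with finite output alphabet 𝒴 have capacity C = I(1/2), and let k, n be positive integers with k < n < 2k and (2k−n)/k < C. Then for every ε > 0 there exists an integer m₀ such that for all m ≥ m₀ there exists a matrix G of size (m+1)k × (m+1)(n−k) in the support of the RaS ensemble such that the linear code 𝒞 = {u ∈ F₂^K : u·G = 0} (K = (m+1)k) has dimension at least (2k−n)(m+1), and there is a decoder ψ : 𝒴^K → F₂^K with Pr{ψ(V) ≠ U} ≤ ε, where U is uniformly distributed on 𝒞 and V is the output of K independent channel uses with input U. -/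
set_option maxHeartbeats 1600000000


open scoped Classical
open Finset

/-- Output distribution `P_p(y) = (1−p)·P(y|0) + p·P(y|1)`. -/
noncomputable def outDist {𝒴 : Type} [Fintype 𝒴] (P : ZMod 2 → 𝒴 → ℝ) (p : ℝ)
    (y : 𝒴) : ℝ := (1 - p) * P 0 y + p * P 1 y

/-- Partial mutual information `I_0(p)`. -/
noncomputable def partialMI0 {𝒴 : Type} [Fintype 𝒴] (P : ZMod 2 → 𝒴 → ℝ) (p : ℝ) : ℝ :=
  ∑ y : 𝒴, P 0 y * Real.logb 2 (P 0 y / outDist P p y)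

/-- Partial mutual information `I_1(p)`. -/
noncomputable def partialMI1 {𝒴 : Type} [Fintype 𝒴] (P : ZMod 2 → 𝒴 → ℝ) (p : ℝ) : ℝ :=
  ∑ y : 𝒴, P 1 y * Real.logb 2 (P 1 y / outDist P p y)

/-- Mutual information `I(p) = (1−p)·I_0(p) + p·I_1(p)`. -/
noncomputable def mutualInfo {𝒴 : Type} [Fintype 𝒴] (P : ZMod 2 → 𝒴 → ℝ) (p : ℝ) : ℝ :=
  (1 - p) * partialMI0 P p + p * partialMI1 P p

/-! ### Auxiliary general lemmas -/

lemma sum_pi_prod {ι X : Type*} [Fintype ι] [DecidableEq ι] [Fintype X] (F : ι → X → ℝ) :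
    ∑ v : ι → X, ∏ i, F i (v i) = ∏ i, ∑ y, F i y := by
  rw [Finset.prod_univ_sum, Fintype.piFinset_univ]

lemma prod_ind {ι : Type*} [Fintype ι] (p : ι → Prop) [DecidablePred p] :
    (∏ i : ι, if p i then (1:ℝ) else 0) = if (∀ i, p i) then 1 else 0 := by
  by_cases h : ∀ i, p i
  · rw [if_pos h]; exact Finset.prod_eq_one (fun i _ => if_pos (h i))
  · rw [if_neg h]
    push_neg at h
    obtain ⟨i, hi⟩ := h
    exact Finset.prod_eq_zero (Finset.mem_univ i) (if_neg hi)

lemma zmod2_cases' : ∀ x : ZMod 2, x = 0 ∨ x = 1 := by decide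

noncomputable def chi (x : ZMod 2) : ℝ := if x = 0 then 1 else -1

lemma chi_zero : chi 0 = 1 := by simp [chi]

lemma chi_add (x y : ZMod 2) : chi (x + y) = chi x * chi y := by
  have e : (1 + 1 : ZMod 2) = 0 := by decide
  rcases zmod2_cases' x with h | h <;> rcases zmod2_cases' y with h' | h' <;>
    subst h <;> subst h' <;>
    simp only [e, add_zero, zero_add] <;> norm_num [chi]

lemma chi_sum {ι : Type*} (s : Finset ι) (g : ι → ZMod 2) :
    chi (∑ i ∈ s, g i) = ∏ i ∈ s, chi (g i) := by
  induction s using Finset.cons_induction with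
  | empty => simp [chi]
  | cons i s hi ih => rw [Finset.sum_cons, Finset.prod_cons, chi_add, ih]

lemma ind_eq_chi (x : ZMod 2) : (if x = 0 then (1:ℝ) else 0) = (1 + chi x) / 2 := by
  rcases zmod2_cases' x with h | h <;> subst h <;> norm_num [chi]

lemma chi_eq (x : ZMod 2) : chi x = 1 - 2 * (if x = 0 then (0:ℝ) else 1) := by
  rcases zmod2_cases' x with h | h <;> subst h <;> norm_num [chi]

lemma two_rpow_sum {ι : Type*} (s : Finset ι) (f : ι → ℝ) :
    (2:ℝ) ^ (∑ i ∈ s, f i) = ∏ i ∈ s, (2:ℝ) ^ (f i) := by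
  induction s using Finset.cons_induction with
  | empty => simp
  | cons i s hi ih => rw [Finset.sum_cons, Finset.prod_cons, Real.rpow_add two_pos, ih]

lemma sum_option_real {A : Type*} [Fintype A] (f : Option A → ℝ) :
    ∑ o : Option A, f o = f none + ∑ a : A, f (some a) := by
  rw [univ_option, Finset.sum_insertNone]

/-! ### Channel symmetry lemmas -/

section Channel
variable {𝒴 : Type} [Fintype 𝒴] (P : ZMod 2 → 𝒴 → ℝ) (π : 𝒴 → 𝒴)

lemma outDist_half (y : 𝒴) : outDist P (1/2) y = (P 0 y + P 1 y) / 2 := by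
  unfold outDist; ring

lemma sum_comp_invol (hπ : ∀ y, π (π y) = y) (F : 𝒴 → ℝ) : ∑ y, F (π y) = ∑ y, F y :=
  Equiv.sum_comp (Function.Involutive.toPerm π hπ) F

lemma outDist_half_pi (hπ : ∀ y, π (π y) = y) (hsym : ∀ y, P 1 y = P 0 (π y)) (y : 𝒴) :
    outDist P (1/2) (π y) = outDist P (1/2) y := by
  rw [outDist_half, outDist_half, hsym y, hsym (π y), hπ y, add_comm]

lemma partialMI1_half (hπ : ∀ y, π (π y) = y) (hsym : ∀ y, P 1 y = P 0 (π y)) :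
    partialMI1 P (1/2) = partialMI0 P (1/2) := by
  unfold partialMI1 partialMI0
  calc ∑ y, P 1 y * Real.logb 2 (P 1 y / outDist P (1/2) y)
      = ∑ y, P 0 (π y) * Real.logb 2 (P 0 (π y) / outDist P (1/2) (π y)) := by
        refine Finset.sum_congr rfl (fun y _ => ?_)
        rw [hsym y, outDist_half_pi P π hπ hsym y]
    _ = ∑ y, P 0 y * Real.logb 2 (P 0 y / outDist P (1/2) y) :=
        sum_comp_invol π hπ (fun y => P 0 y * Real.logb 2 (P 0 y / outDist P (1/2) y))

lemma mutualInfo_half (hπ : ∀ y, π (π y) = y) (hsym : ∀ y, P 1 y = P 0 (π y)) :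
    mutualInfo P (1/2) = partialMI0 P (1/2) := by
  unfold mutualInfo; rw [partialMI1_half P π hπ hsym]; ring

lemma mean_Z (hπ : ∀ y, π (π y) = y) (hsym : ∀ y, P 1 y = P 0 (π y)) (x : ZMod 2) :
    ∑ y, P x y * Real.logb 2 (P x y / outDist P (1/2) y) = mutualInfo P (1/2) := by
  rcases zmod2_cases' x with h | h <;> subst h
  · rw [mutualInfo_half P π hπ hsym]; rfl
  · rw [mutualInfo_half P π hπ hsym, ← partialMI1_half P π hπ hsym]; rfl

lemma g_eq (hπ : ∀ y, π (π y) = y) (hsym : ∀ y, P 1 y = P 0 (π y)) (x w : ZMod 2) :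
    ∑ y, P x y * (P (x + w) y / outDist P (1/2) y)
      = if w = 0 then (∑ y, P 0 y * (P 0 y / outDist P (1/2) y))
        else (∑ y, P 0 y * (P 1 y / outDist P (1/2) y)) := by
  have g11 : ∑ y, P 1 y * (P 1 y / outDist P (1/2) y)
      = ∑ y, P 0 y * (P 0 y / outDist P (1/2) y) := by
    calc ∑ y, P 1 y * (P 1 y / outDist P (1/2) y)
        = ∑ y, P 0 (π y) * (P 0 (π y) / outDist P (1/2) (π y)) := by
          refine Finset.sum_congr rfl (fun y _ => ?_)
          rw [hsym y, outDist_half_pi P π hπ hsym y]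
      _ = _ := sum_comp_invol π hπ (fun y => P 0 y * (P 0 y / outDist P (1/2) y))
  have g10 : ∑ y, P 1 y * (P 0 y / outDist P (1/2) y)
      = ∑ y, P 0 y * (P 1 y / outDist P (1/2) y) := by
    refine Finset.sum_congr rfl (fun y _ => ?_); ring
  have e : (1 + 1 : ZMod 2) = 0 := by decide
  rcases zmod2_cases' x with h | h <;> rcases zmod2_cases' w with h' | h' <;>
      subst h <;> subst h' <;> simp only [e, add_zero, zero_add, if_pos, if_neg,
        (by decide : (1 : ZMod 2) ≠ 0), if_true, if_false]
  · exact g11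
  · exact g10

lemma alpha_add_beta (hPnonneg : ∀ x y, 0 ≤ P x y) (hPsum : ∀ x, ∑ y : 𝒴, P x y = 1) :
    (∑ y, P 0 y * (P 1 y / outDist P (1/2) y))
      + (∑ y, P 0 y * (P 0 y / outDist P (1/2) y)) = 2 := by
  rw [← Finset.sum_add_distrib]
  have key : ∀ y, P 0 y * (P 1 y / outDist P (1/2) y)
      + P 0 y * (P 0 y / outDist P (1/2) y) = 2 * P 0 y := by
    intro y
    rw [outDist_half]
    by_cases h : P 0 y + P 1 y = 0
    · have h0 : P 0 y = 0 := le_antisymm (by nlinarith [hPnonneg 1 y]) (hPnonneg 0 y)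
      simp [h0]
    · field_simp
      ring
  calc ∑ y, (P 0 y * (P 1 y / outDist P (1/2) y) + P 0 y * (P 0 y / outDist P (1/2) y))
      = ∑ y, 2 * P 0 y := Finset.sum_congr rfl (fun y _ => key y)
    _ = 2 := by rw [← Finset.mul_sum, hPsum 0, mul_one]

end Channel

/-- **The parity-check code ensemble associated with the RaS ensemble achieves
capacity.** If `k < n < 2k` and `(2k−n)/k < C` with `C = I(1/2)` the capacity of the
BIOS channel, then for every `ε > 0` there is `m₀` such that for all `m ≥ m₀` some
matrix `G` in the support of the RaS ensemble yields a parity-check code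
`𝒞 = {u : u·G = 0}` of dimension at least `(2k−n)(m+1)`, and some decoder `ψ`
achieves `Pr{ψ(V) ≠ U} ≤ ε` for `U` uniform on `𝒞` and `V` the channel output with
input `U`. -/
theorem RaS_parity_check_coding_theorem
    (𝒴 : Type) [Fintype 𝒴]
    (P : ZMod 2 → 𝒴 → ℝ) (π : 𝒴 → 𝒴)
    (hPnonneg : ∀ x y, 0 ≤ P x y) (hPsum : ∀ x, ∑ y : 𝒴, P x y = 1)
    (hπ : ∀ y, π (π y) = y) (hsym : ∀ y, P 1 y = P 0 (π y))
    (k n : ℕ) (hk : 0 < k) (hkn : k < n) (hn2k : n < 2 * k)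
    (hrate : (2 * (k : ℝ) - n) / k < mutualInfo P (1 / 2))
    (ε : ℝ) (hε : 0 < ε) :
    ∃ m₀ : ℕ, ∀ m ≥ m₀,
      ∃ (G : Matrix (Fin (m + 1) × Fin k) (Fin (m + 1) × Fin (n - k)) (ZMod 2))
        (ψ : ((Fin (m + 1) × Fin k) → 𝒴) → ((Fin (m + 1) × Fin k) → ZMod 2)),
        -- G lies in the support of the RaS ensemble
        (∀ (i j : Fin (m + 1)) (b : Fin (n - k)),
          (Finset.univ.filter (fun a : Fin k => G (i, a) (j, b) = 1)).card ≤ 1) ∧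
        -- the parity-check code 𝒞 = {u : u·G = 0} has dimension ≥ (2k−n)(m+1)
        (2 * k - n) * (m + 1) ≤
          Module.finrank (ZMod 2) (LinearMap.ker (Matrix.vecMulLinear G)) ∧
        -- error probability at most ε for U uniform on 𝒞 and V the channel output
        (∑ u ∈ Finset.univ.filter
            (fun u : (Fin (m + 1) × Fin k) → ZMod 2 => Matrix.vecMul u G = 0),
          ∑ v : (Fin (m + 1) × Fin k) → 𝒴,
            (((Finset.univ.filter
                (fun u : (Fin (m + 1) × Fin k) → ZMod 2 =>
                  Matrix.vecMul u G = 0)).card : ℝ)⁻¹ *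
              (∏ i, P (u i) (v i)) *
              (if ψ v ≠ u then 1 else 0))) ≤ ε := by
  classical
  -- basic cast facts
  have hk' : (0:ℝ) < k := by exact_mod_cast hk
  have hk1 : (1:ℝ) ≤ k := by exact_mod_cast hk
  have hkn' : (k:ℝ) < n := by exact_mod_cast hkn
  have hn2k' : (n:ℝ) < 2*k := by exact_mod_cast hn2k
  have hnkcast : ((n - k : ℕ) : ℝ) = (n:ℝ) - k := by
    exact_mod_cast Nat.cast_sub (le_of_lt hkn)
  set C : ℝ := mutualInfo P (1/2) with hCdef
  have hrate' : 2 * (k:ℝ) - n < C * k := by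
    rwa [div_lt_iff₀ hk'] at hrate
  have hρpos : 0 < (n:ℝ) - 2*k + k*C := by linarith only [hrate']
  set ρ : ℝ := (n:ℝ) - 2*k + k*C with hρdef
  set δ : ℝ := ρ/(4*k) with hδdef
  have hδpos : 0 < δ := div_pos hρpos (by positivity)
  have hkδ : (k:ℝ)*δ = ρ/4 := by rw [hδdef]; field_simp
  set θ : ℝ := ((k:ℝ)-1)/((k:ℝ)+1) with hθdef
  have hθ0 : 0 ≤ θ := div_nonneg (by linarith) (by positivity)
  have hθ1 : θ < 1 := by rw [div_lt_one (by positivity)]; linarith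
  have hlog2 : 0 < Real.log 2 := Real.log_pos one_lt_two
  have hnk' : (0:ℝ) < (n:ℝ) - k := by linarith
  obtain ⟨s₁, hs₁⟩ := exists_pow_lt_of_lt_one
    (show (0:ℝ) < 3/4*ρ*Real.log 2/((n:ℝ)-k) by positivity) hθ1
  set s₀ : ℕ := max s₁ 1 with hs₀def
  have hs₀1 : 1 ≤ s₀ := le_max_right _ _
  set ν : ℝ := θ^s₀ with hνdef
  have hν0 : 0 ≤ ν := pow_nonneg hθ0 _
  have hνsmall : ((n:ℝ)-k)*ν < 3/4*ρ*Real.log 2 := by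
    have h1 : ν ≤ θ^s₁ := pow_le_pow_of_le_one hθ0 hθ1.le (le_max_left _ _)
    rw [lt_div_iff₀ hnk'] at hs₁
    have h2 := mul_le_mul_of_nonneg_left h1 (le_of_lt hnk')
    linarith only [h2, hs₁]
  -- channel statistics
  set Z : ZMod 2 → 𝒴 → ℝ := fun x y => Real.logb 2 (P x y / outDist P (1/2) y) with hZdef
  have hmean : ∀ x : ZMod 2, ∑ y, P x y * Z x y = C := by
    intro x; rw [hCdef]; simp only [hZdef]; exact mean_Z P π hπ hsym x
  set V₀ : ℝ := (∑ y, P 0 y * (Z 0 y - C)^2) + (∑ y, P 1 y * (Z 1 y - C)^2) with hVdef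
  have hVterm : ∀ x : ZMod 2, 0 ≤ ∑ y, P x y * (Z x y - C)^2 :=
    fun x => Finset.sum_nonneg fun y _ => mul_nonneg (hPnonneg x y) (sq_nonneg _)
  have hVx : ∀ x : ZMod 2, ∑ y, P x y * (Z x y - C)^2 ≤ V₀ := by
    intro x
    rcases zmod2_cases' x with h | h <;> subst h <;> rw [hVdef]
    · linarith [hVterm 1]
    · linarith [hVterm 0]
  have hV0 : 0 ≤ V₀ := by rw [hVdef]; exact add_nonneg (hVterm 0) (hVterm 1)
  have hout0 : ∀ y, 0 ≤ outDist P (1/2) y := by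
    intro y; rw [outDist_half]
    have := hPnonneg 0 y; have := hPnonneg 1 y; linarith
  set α : ℝ := ∑ y, P 0 y * (P 1 y / outDist P (1/2) y) with hαdef
  set β : ℝ := ∑ y, P 0 y * (P 0 y / outDist P (1/2) y) with hβdef
  have hα0 : 0 ≤ α := by
    rw [hαdef]
    exact Finset.sum_nonneg fun y _ =>
      mul_nonneg (hPnonneg 0 y) (div_nonneg (hPnonneg 1 y) (hout0 y))
  have hβ0 : 0 ≤ β := by
    rw [hβdef]
    exact Finset.sum_nonneg fun y _ =>
      mul_nonneg (hPnonneg 0 y) (div_nonneg (hPnonneg 0 y) (hout0 y))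
  have hαβ : α + β = 2 := by
    rw [hαdef, hβdef]; exact alpha_add_beta P hPnonneg hPsum
  have hgab : ∀ x w : ZMod 2,
      ∑ y, P x y * (P (x + w) y / outDist P (1/2) y) = if w = 0 then β else α := by
    intro x w; rw [hβdef, hαdef]; exact g_eq P π hπ hsym x w
  -- the base of the geometric bound
  set ζ : ℝ := ((1+ν)/2)^(n-k) * (2:ℝ)^((k:ℝ)*(1-C+δ)) with hζdef
  have hζpos : 0 < ζ := by
    rw [hζdef]
    exact mul_pos (pow_pos (by linarith) _) (Real.rpow_pos_of_pos two_pos _)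
  have hζ1 : ζ < 1 := by
    have e : (k:ℝ)*(1-C+δ) = ((n:ℝ)-k) - ρ + ρ/4 := by
      have h := hkδ
      rw [hρdef] at h ⊢
      linear_combination h
    have hlogν : Real.log (1+ν) ≤ ν := by
      have h := Real.log_le_sub_one_of_pos (show (0:ℝ) < 1+ν by linarith only [hν0])
      linarith only [h]
    have hmul : ((n:ℝ)-k) * Real.log (1+ν) ≤ ((n:ℝ)-k) * ν :=
      mul_le_mul_of_nonneg_left hlogν (le_of_lt hnk')
    have hlogζ : Real.log ζ < 0 := by
      rw [hζdef, Real.log_mul (ne_of_gt (pow_pos (by linarith : (0:ℝ) < (1+ν)/2) _))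
        (ne_of_gt (Real.rpow_pos_of_pos two_pos _)), Real.log_pow,
        Real.log_rpow two_pos,
        Real.log_div (by positivity : (1:ℝ)+ν ≠ 0) (two_ne_zero), hnkcast, e]
      have hexp2 : ((n:ℝ)-k) * (Real.log (1+ν) - Real.log 2)
          + (((n:ℝ)-k) - ρ + ρ/4) * Real.log 2
          = ((n:ℝ)-k) * Real.log (1+ν) - 3/4*ρ*Real.log 2 := by ring
      rw [hexp2]
      linarith only [hmul, hνsmall]
    exact (Real.log_neg_iff hζpos).mp hlogζ
  set ρ₁ : ℝ := ((1+θ)/2)^(n-k) with hρ₁def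
  have hρ₁0 : 0 ≤ ρ₁ := by rw [hρ₁def]; positivity
  have hρ₁1 : ρ₁ < 1 := by
    rw [hρ₁def]
    exact pow_lt_one₀ (by linarith) (by rw [div_lt_one two_pos]; linarith) (by omega)
  -- the three error terms
  set T1 : ℕ → ℝ := fun m => (V₀/((k:ℝ)*δ^2)) * (1/((m:ℝ)+1)) with hT1def
  set T2 : ℕ → ℝ := fun m =>
    Real.exp ((2:ℝ)^k - 1) * ((((m+1:ℕ)):ℝ)^(s₀-1) * ρ₁^(m+1)) with hT2def
  set T3 : ℕ → ℝ := fun m => ζ^(m+1) with hT3def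
  have hT1 : Filter.Tendsto T1 Filter.atTop (nhds 0) := by
    have h := tendsto_one_div_add_atTop_nhds_zero_nat.const_mul (V₀/((k:ℝ)*δ^2))
    rw [mul_zero] at h
    exact h
  have hT2 : Filter.Tendsto T2 Filter.atTop (nhds 0) := by
    have h := ((Filter.tendsto_add_atTop_iff_nat 1).mpr
      (tendsto_pow_const_mul_const_pow_of_lt_one (s₀-1) hρ₁0 hρ₁1)).const_mul
      (Real.exp ((2:ℝ)^k - 1))
    rw [mul_zero] at h
    exact h
  have hT3 : Filter.Tendsto T3 Filter.atTop (nhds 0) := by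
    exact (Filter.tendsto_add_atTop_iff_nat 1).mpr
      (tendsto_pow_atTop_nhds_zero_of_lt_one hζpos.le hζ1)
  have hTB : ∀ᶠ m in Filter.atTop, T1 m + T2 m + T3 m < ε := by
    have h := (hT1.add hT2).add hT3
    rw [add_zero, add_zero] at h
    exact h.eventually_lt_const hε
  obtain ⟨m₀, hm₀⟩ := Filter.eventually_atTop.mp hTB
  refine ⟨m₀, fun m hm => ?_⟩
  -- per-m definitions
  have hKrcard : Fintype.card (Fin (m+1) × Fin k) = (m+1)*k := by simp
  have hKrR : (((m+1)*k : ℕ):ℝ) = ((m:ℝ)+1)*(k:ℝ) := by push_cast; ring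
  set A : ℝ := (2:ℝ)^((((m+1)*k : ℕ):ℝ)*(C-δ)) with hAdef
  have hA0 : 0 < A := Real.rpow_pos_of_pos two_pos _
  set L : ((Fin (m+1) × Fin k) → ZMod 2) → ((Fin (m+1) × Fin k) → 𝒴) → ℝ :=
    fun c v => ∏ i, (P (c i) (v i) / outDist P (1/2) (v i)) with hLdef
  have hL0 : ∀ c v, 0 ≤ L c v := by
    intro c v; simp only [hLdef]
    exact Finset.prod_nonneg fun i _ => div_nonneg (hPnonneg _ _) (hout0 _)
  set μ : ((Fin (m+1) × Fin k) → ZMod 2) → ((Fin (m+1) × Fin k) → 𝒴) → ℝ :=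
    fun u v => ∏ i, P (u i) (v i) with hμdef
  have hμ0 : ∀ u v, 0 ≤ μ u v := by
    intro u v; simp only [hμdef]
    exact Finset.prod_nonneg fun i _ => hPnonneg _ _
  have hμsum : ∀ u, ∑ v, μ u v = 1 := by
    intro u; simp only [hμdef]
    rw [sum_pi_prod (fun i y => P (u i) y)]
    exact Finset.prod_eq_one fun i _ => hPsum (u i)
  -- ==================== Chebyshev bound ====================
  have cheb : ∀ u : (Fin (m+1) × Fin k) → ZMod 2,
      ∑ v : (Fin (m+1) × Fin k) → 𝒴, μ u v * (if A ≤ L u v then 0 else 1) ≤ T1 m := by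
    intro u
    have hvar : ∑ v : (Fin (m+1) × Fin k) → 𝒴, μ u v * (∑ i, (Z (u i) (v i) - C))^2
        ≤ (((m+1)*k : ℕ):ℝ) * V₀ := by
      have expand : ∀ v : (Fin (m+1) × Fin k) → 𝒴,
          μ u v * (∑ i, (Z (u i) (v i) - C))^2
          = ∑ i, ∑ j, ∏ l, (P (u l) (v l) * (if l = i then Z (u i) (v l) - C else 1)
              * (if l = j then Z (u j) (v l) - C else 1)) := by
        intro v
        rw [sq, Finset.sum_mul_sum, Finset.mul_sum]
        refine Finset.sum_congr rfl fun i _ => ?_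
        rw [Finset.mul_sum]
        refine Finset.sum_congr rfl fun j _ => ?_
        rw [Finset.prod_mul_distrib, Finset.prod_mul_distrib,
          Finset.prod_ite_eq' Finset.univ i (fun l => Z (u i) (v l) - C),
          Finset.prod_ite_eq' Finset.univ j (fun l => Z (u j) (v l) - C),
          if_pos (Finset.mem_univ i), if_pos (Finset.mem_univ j)]
        simp only [hμdef]
        ring
      have eval : ∀ i j : Fin (m+1) × Fin k,
          (∑ v : (Fin (m+1) × Fin k) → 𝒴, ∏ l, (P (u l) (v l)
            * (if l = i then Z (u i) (v l) - C else 1)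
            * (if l = j then Z (u j) (v l) - C else 1)))
          = ∏ l, ∑ y, (P (u l) y * (if l = i then Z (u i) y - C else 1)
            * (if l = j then Z (u j) y - C else 1)) := fun i j =>
        sum_pi_prod (fun l y => P (u l) y * (if l = i then Z (u i) y - C else 1)
            * (if l = j then Z (u j) y - C else 1))
      have hzero : ∀ i j : Fin (m+1) × Fin k, i ≠ j →
          (∏ l, ∑ y, (P (u l) y * (if l = i then Z (u i) y - C else 1)
            * (if l = j then Z (u j) y - C else 1))) = 0 := by
        intro i j hij
        refine Finset.prod_eq_zero (Finset.mem_univ i) ?_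
        have h1 : ∀ y, P (u i) y * (if i = i then Z (u i) y - C else 1)
            * (if i = j then Z (u j) y - C else 1)
            = P (u i) y * Z (u i) y - P (u i) y * C := by
          intro y; rw [if_pos rfl, if_neg hij]; ring
        rw [Finset.sum_congr rfl fun y _ => h1 y, Finset.sum_sub_distrib,
          hmean (u i), ← Finset.sum_mul, hPsum (u i), one_mul, sub_self]
      have hdiag : ∀ i : Fin (m+1) × Fin k,
          (∏ l, ∑ y, (P (u l) y * (if l = i then Z (u i) y - C else 1)
            * (if l = i then Z (u i) y - C else 1))) ≤ V₀ := by
        intro i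
        have hbody : (∑ y, (P (u i) y * (if i = i then Z (u i) y - C else 1)
            * (if i = i then Z (u i) y - C else 1))) ≤ V₀ := by
          have h2 : ∀ y, P (u i) y * (if i = i then Z (u i) y - C else 1)
              * (if i = i then Z (u i) y - C else 1)
              = P (u i) y * (Z (u i) y - C)^2 := by
            intro y; rw [if_pos rfl]; ring
          rw [Finset.sum_congr rfl fun y _ => h2 y]
          exact hVx (u i)
        refine le_trans (le_of_eq (Finset.prod_eq_single i ?_ ?_)) hbody
        · intro l _ hl
          have h1 : ∀ y, P (u l) y * (if l = i then Z (u i) y - C else 1)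
              * (if l = i then Z (u i) y - C else 1) = P (u l) y := by
            intro y; rw [if_neg hl]; ring
          rw [Finset.sum_congr rfl fun y _ => h1 y]; exact hPsum (u l)
        · intro h; exact absurd (Finset.mem_univ i) h
      calc ∑ v : (Fin (m+1) × Fin k) → 𝒴, μ u v * (∑ i, (Z (u i) (v i) - C))^2
          = ∑ v : (Fin (m+1) × Fin k) → 𝒴, ∑ i, ∑ j,
              ∏ l, (P (u l) (v l) * (if l = i then Z (u i) (v l) - C else 1)
                * (if l = j then Z (u j) (v l) - C else 1)) :=
            Finset.sum_congr rfl fun v _ => expand v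
        _ = ∑ i : Fin (m+1) × Fin k, ∑ v : (Fin (m+1) × Fin k) → 𝒴, ∑ j,
              ∏ l, (P (u l) (v l) * (if l = i then Z (u i) (v l) - C else 1)
                * (if l = j then Z (u j) (v l) - C else 1)) := Finset.sum_comm
        _ = ∑ i : Fin (m+1) × Fin k, ∑ j, ∑ v : (Fin (m+1) × Fin k) → 𝒴,
              ∏ l, (P (u l) (v l) * (if l = i then Z (u i) (v l) - C else 1)
                * (if l = j then Z (u j) (v l) - C else 1)) :=
            Finset.sum_congr rfl fun i _ => Finset.sum_comm
        _ = ∑ i : Fin (m+1) × Fin k, ∑ j, ∏ l, ∑ y, (P (u l) y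
              * (if l = i then Z (u i) y - C else 1)
              * (if l = j then Z (u j) y - C else 1)) :=
            Finset.sum_congr rfl fun i _ => Finset.sum_congr rfl fun j _ => eval i j
        _ = ∑ i : Fin (m+1) × Fin k, ∏ l, ∑ y, (P (u l) y
              * (if l = i then Z (u i) y - C else 1)
              * (if l = i then Z (u i) y - C else 1)) := by
            refine Finset.sum_congr rfl fun i _ => ?_
            exact Finset.sum_eq_single i
              (fun j _ hji => hzero i j (fun h => hji h.symm))
              (fun h => absurd (Finset.mem_univ i) h)
        _ ≤ ∑ _i : Fin (m+1) × Fin k, V₀ := Finset.sum_le_sum fun i _ => hdiag i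
        _ = (((m+1)*k : ℕ):ℝ) * V₀ := by
            rw [Finset.sum_const, Finset.card_univ, hKrcard, nsmul_eq_mul]
    have pt : ∀ v, μ u v * (if A ≤ L u v then 0 else 1)
        ≤ μ u v * ((∑ i, (Z (u i) (v i) - C))^2 / ((((m+1)*k:ℕ):ℝ)*δ)^2) := by
      intro v
      by_cases hcase : A ≤ L u v
      · rw [if_pos hcase, mul_zero]
        exact mul_nonneg (hμ0 u v) (div_nonneg (sq_nonneg _) (sq_nonneg _))
      · rw [if_neg hcase, mul_one]
        rcases (hμ0 u v).eq_or_lt with h0 | h0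
        · rw [← h0, zero_mul]
        · have hfac : ∀ i, 0 < P (u i) (v i) := by
            intro i
            rcases (hPnonneg (u i) (v i)).eq_or_lt with h | h
            · exfalso
              have hz : μ u v = 0 := by
                simp only [hμdef]
                exact Finset.prod_eq_zero (Finset.mem_univ i) h.symm
              rw [hz] at h0; exact lt_irrefl 0 h0
            · exact h
          have hph : ∀ i, 0 < outDist P (1/2) (v i) := by
            intro i
            have h01 : P (u i) (v i) ≤ P 0 (v i) + P 1 (v i) := by
              rcases zmod2_cases' (u i) with h | h <;> rw [h]
              · linarith only [hPnonneg 1 (v i)]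
              · linarith only [hPnonneg 0 (v i)]
            rw [outDist_half]
            linarith only [hfac i, h01]
          have hr : ∀ i, 0 < P (u i) (v i) / outDist P (1/2) (v i) :=
            fun i => div_pos (hfac i) (hph i)
          have hLZ : L u v = (2:ℝ) ^ (∑ i, Z (u i) (v i)) := by
            simp only [hLdef, hZdef]
            rw [two_rpow_sum]
            exact (Finset.prod_congr rfl fun i _ =>
              Real.rpow_logb two_pos (by norm_num) (hr i)).symm
          have hsumZ : ∑ i, Z (u i) (v i) < (((m+1)*k:ℕ):ℝ)*(C-δ) := by
            have hlt : L u v < A := lt_of_not_ge hcase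
            rw [hLZ, hAdef] at hlt
            exact (Real.rpow_lt_rpow_left_iff one_lt_two).mp hlt
          have hDsum : ∑ i, (Z (u i) (v i) - C)
              = (∑ i, Z (u i) (v i)) - (((m+1)*k:ℕ):ℝ)*C := by
            rw [Finset.sum_sub_distrib, Finset.sum_const, Finset.card_univ, hKrcard,
              nsmul_eq_mul]
          have hKδpos : 0 < (((m+1)*k:ℕ):ℝ)*δ := by
            rw [hKrR]; positivity
          have habs : (((m+1)*k:ℕ):ℝ)*δ ≤ |∑ i, (Z (u i) (v i) - C)| := by
            have hneg : (∑ i, Z (u i) (v i)) - (((m+1)*k:ℕ):ℝ)*C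
                < -((((m+1)*k:ℕ):ℝ)*δ) := by
              have he : (((m+1)*k:ℕ):ℝ)*(C-δ) = (((m+1)*k:ℕ):ℝ)*C
                  - (((m+1)*k:ℕ):ℝ)*δ := by ring
              rw [he] at hsumZ
              linarith only [hsumZ]
            rw [hDsum, abs_of_neg (by linarith only [hneg, hKδpos])]
            linarith only [hneg]
          have hsq : ((((m+1)*k:ℕ):ℝ)*δ)^2 ≤ (∑ i, (Z (u i) (v i) - C))^2 := by
            calc ((((m+1)*k:ℕ):ℝ)*δ)^2 ≤ |∑ i, (Z (u i) (v i) - C)|^2 :=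
                pow_le_pow_left₀ hKδpos.le habs 2
              _ = (∑ i, (Z (u i) (v i) - C))^2 := sq_abs _
          have hone : (1:ℝ) ≤ (∑ i, (Z (u i) (v i) - C))^2 / ((((m+1)*k:ℕ):ℝ)*δ)^2 :=
            (one_le_div (by positivity)).mpr hsq
          calc μ u v = μ u v * 1 := (mul_one _).symm
            _ ≤ _ := mul_le_mul_of_nonneg_left hone (hμ0 u v)
    calc ∑ v : (Fin (m+1) × Fin k) → 𝒴, μ u v * (if A ≤ L u v then 0 else 1)
        ≤ ∑ v : (Fin (m+1) × Fin k) → 𝒴,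
            μ u v * ((∑ i, (Z (u i) (v i) - C))^2 / ((((m+1)*k:ℕ):ℝ)*δ)^2) :=
          Finset.sum_le_sum fun v _ => pt v
      _ = (∑ v : (Fin (m+1) × Fin k) → 𝒴, μ u v * (∑ i, (Z (u i) (v i) - C))^2)
            / ((((m+1)*k:ℕ):ℝ)*δ)^2 := by
          rw [Finset.sum_div]
          exact Finset.sum_congr rfl fun v _ => (mul_div_assoc _ _ _).symm
      _ ≤ ((((m+1)*k:ℕ):ℝ) * V₀) / ((((m+1)*k:ℕ):ℝ)*δ)^2 := by
          apply div_le_div_of_nonneg_right hvar ?_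
          · rw [hKrR]; positivity
      _ = T1 m := by
          simp only [hT1def]
          rw [hKrR]
          field_simp
  -- ==================== per-pair bound ====================
  set sfun : ((Fin (m+1) × Fin k) → ZMod 2) → ℕ :=
    fun w => (Finset.univ.filter (fun i : Fin (m+1) => ∃ a, w (i,a) ≠ 0)).card
    with hsfundef
  set qbar : ((Fin (m+1) × Fin k) → ZMod 2) → ℝ :=
    fun w => if sfun w < s₀ then 1 else A⁻¹ * ∏ i, (if w i = 0 then β else α)
    with hqbardef
  have hprodif0 : ∀ w : (Fin (m+1) × Fin k) → ZMod 2,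
      0 ≤ ∏ i, (if w i = 0 then β else α) := by
    intro w
    refine Finset.prod_nonneg fun i _ => ?_
    split_ifs
    · exact hβ0
    · exact hα0
  have hqbar0 : ∀ w, 0 ≤ qbar w := by
    intro w; simp only [hqbardef]
    split_ifs
    · exact zero_le_one
    · exact mul_nonneg (inv_nonneg.mpr hA0.le) (hprodif0 w)
  have pairb : ∀ u w : (Fin (m+1) × Fin k) → ZMod 2,
      ∑ v : (Fin (m+1) × Fin k) → 𝒴,
        μ u v * (if A ≤ L (u + w) v then (1:ℝ) else 0) ≤ qbar w := by
    intro u w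
    by_cases hcase : sfun w < s₀
    · have h1 : ∀ v, μ u v * (if A ≤ L (u+w) v then (1:ℝ) else 0) ≤ μ u v := by
        intro v
        calc μ u v * (if A ≤ L (u+w) v then (1:ℝ) else 0) ≤ μ u v * 1 :=
            mul_le_mul_of_nonneg_left (by split_ifs <;> norm_num) (hμ0 u v)
          _ = μ u v := mul_one _
      calc ∑ v : (Fin (m+1) × Fin k) → 𝒴, μ u v * (if A ≤ L (u+w) v then (1:ℝ) else 0)
          ≤ ∑ v : (Fin (m+1) × Fin k) → 𝒴, μ u v := Finset.sum_le_sum fun v _ => h1 v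
        _ = 1 := hμsum u
        _ = qbar w := by simp only [hqbardef]; rw [if_pos hcase]
    · have h1 : ∀ v, μ u v * (if A ≤ L (u+w) v then (1:ℝ) else 0)
          ≤ A⁻¹ * (μ u v * L (u+w) v) := by
        intro v
        split_ifs with h
        · rw [mul_one]
          have h2 : μ u v * A ≤ μ u v * L (u+w) v :=
            mul_le_mul_of_nonneg_left h (hμ0 u v)
          calc μ u v = A⁻¹ * (μ u v * A) := by
                rw [(by ring : A⁻¹ * (μ u v * A) = μ u v * (A⁻¹ * A)),
                  inv_mul_cancel₀ hA0.ne', mul_one]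
            _ ≤ A⁻¹ * (μ u v * L (u+w) v) :=
              mul_le_mul_of_nonneg_left h2 (inv_nonneg.mpr hA0.le)
        · rw [mul_zero]
          exact mul_nonneg (inv_nonneg.mpr hA0.le) (mul_nonneg (hμ0 u v) (hL0 _ v))
      have h2 : ∑ v : (Fin (m+1) × Fin k) → 𝒴, μ u v * L (u+w) v
          = ∏ i, (if w i = 0 then β else α) := by
        have h3 : ∀ v : (Fin (m+1) × Fin k) → 𝒴, μ u v * L (u+w) v
            = ∏ i, (P (u i) (v i) * (P (u i + w i) (v i) / outDist P (1/2) (v i))) := by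
          intro v
          simp only [hμdef, hLdef, Pi.add_apply, ← Finset.prod_mul_distrib]
        rw [Finset.sum_congr rfl fun v _ => h3 v,
          sum_pi_prod (fun i y => P (u i) y * (P (u i + w i) y / outDist P (1/2) y))]
        exact Finset.prod_congr rfl fun i _ => hgab (u i) (w i)
      calc ∑ v : (Fin (m+1) × Fin k) → 𝒴, μ u v * (if A ≤ L (u+w) v then (1:ℝ) else 0)
          ≤ ∑ v : (Fin (m+1) × Fin k) → 𝒴, A⁻¹ * (μ u v * L (u+w) v) :=
            Finset.sum_le_sum fun v _ => h1 v
        _ = A⁻¹ * ∑ v : (Fin (m+1) × Fin k) → 𝒴, μ u v * L (u+w) v := by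
            rw [Finset.mul_sum]
        _ = A⁻¹ * ∏ i, (if w i = 0 then β else α) := by rw [h2]
        _ = qbar w := by simp only [hqbardef]; rw [if_neg hcase]
  -- ==================== the RaS ensemble ====================
  set Gm : ((Fin (m+1) × Fin (n-k)) → (Fin (m+1) → Option (Fin k))) →
      Matrix (Fin (m+1) × Fin k) (Fin (m+1) × Fin (n-k)) (ZMod 2) :=
    fun ω r c => if ω c r.1 = some r.2 then 1 else 0 with hGmdef
  set BB : Matrix (Fin (m+1) × Fin k) (Fin (m+1) × Fin (n-k)) (ZMod 2) → ℝ :=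
    fun G => ∑ w ∈ Finset.univ.filter
        (fun w : (Fin (m+1) × Fin k) → ZMod 2 => w ≠ 0),
      (if Matrix.vecMul w G = 0 then (1:ℝ) else 0) * qbar w with hBBdef
  -- column values
  have hcol : ∀ (w : (Fin (m+1) × Fin k) → ZMod 2) ω (c : Fin (m+1) × Fin (n-k)),
      Matrix.vecMul w (Gm ω) c = ∑ i : Fin (m+1), ((ω c i).elim 0 (fun a => w (i, a))) := by
    intro w ω c
    simp only [Matrix.vecMul, dotProduct, hGmdef]
    rw [Fintype.sum_prod_type]
    refine Finset.sum_congr rfl fun i _ => ?_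
    show ∑ a : Fin k, w (i, a) * (if ω c i = some a then (1:ZMod 2) else 0)
      = (ω c i).elim 0 (fun a => w (i, a))
    rcases hoc : ω c i with _ | a₀
    · calc ∑ a : Fin k, w (i, a) * (if (none : Option (Fin k)) = some a
            then (1:ZMod 2) else 0)
          = ∑ _a : Fin k, (0 : ZMod 2) := Finset.sum_congr rfl fun a _ => by simp
        _ = 0 := Finset.sum_const_zero
        _ = (none : Option (Fin k)).elim 0 (fun a => w (i, a)) := rfl
    · calc ∑ a : Fin k, w (i, a) * (if some a₀ = some a then (1:ZMod 2) else 0)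
          = w (i, a₀) * (if some a₀ = some a₀ then (1:ZMod 2) else 0) :=
            Finset.sum_eq_single a₀
              (fun b _ hb => by
                rw [if_neg (fun h => hb (Option.some.inj h).symm), mul_zero])
              (fun h => absurd (Finset.mem_univ a₀) h)
        _ = w (i, a₀) := by rw [if_pos rfl, mul_one]
        _ = (some a₀ : Option (Fin k)).elim 0 (fun a => w (i, a)) := rfl
  have hindprod : ∀ (G : Matrix (Fin (m+1) × Fin k) (Fin (m+1) × Fin (n-k)) (ZMod 2))
      (w : (Fin (m+1) × Fin k) → ZMod 2), (if Matrix.vecMul w G = 0 then (1:ℝ) else 0)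
      = ∏ c : Fin (m+1) × Fin (n-k), (if Matrix.vecMul w G c = 0 then (1:ℝ) else 0) := by
    intro G w
    rw [prod_ind (fun c => Matrix.vecMul w G c = 0)]
    have hiff : (Matrix.vecMul w G = 0) ↔ ∀ c, Matrix.vecMul w G c = 0 := by
      rw [funext_iff]; simp only [Pi.zero_apply]
    exact if_congr hiff rfl rfl
  -- the per-word membership probability bound
  have hPrw : ∀ w : (Fin (m+1) × Fin k) → ZMod 2,
      (∑ ω : (Fin (m+1) × Fin (n-k)) → (Fin (m+1) → Option (Fin k)),
        (if Matrix.vecMul w (Gm ω) = 0 then (1:ℝ) else 0))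
      ≤ (Fintype.card ((Fin (m+1) × Fin (n-k)) → (Fin (m+1) → Option (Fin k))) : ℝ)
        * ((1 + θ^(min (sfun w) s₀))/2)^((m+1)*(n-k)) := by
    intro w
    have hfsum : (∑ f : Fin (m+1) → Option (Fin k),
        (if (∑ i : Fin (m+1), ((f i).elim 0 (fun a => w (i,a)))) = (0:ZMod 2)
          then (1:ℝ) else 0))
        = ((((k:ℝ)+1)^(m+1)) + ∏ i : Fin (m+1), (1 + ∑ a, chi (w (i,a))))/2 := by
      have h1 : ∀ f : Fin (m+1) → Option (Fin k),
          (if (∑ i : Fin (m+1), ((f i).elim 0 (fun a => w (i,a)))) = (0:ZMod 2)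
            then (1:ℝ) else 0)
          = (1 + ∏ i : Fin (m+1), chi ((f i).elim 0 (fun a => w (i,a))))/2 := by
        intro f; rw [ind_eq_chi, chi_sum]
      rw [Finset.sum_congr rfl fun f _ => h1 f, ← Finset.sum_div,
        Finset.sum_add_distrib, Finset.sum_const, Finset.card_univ]
      have hcard : Fintype.card (Fin (m+1) → Option (Fin k)) = (k+1)^(m+1) := by
        rw [Fintype.card_fun]
        simp
      rw [hcard, sum_pi_prod (fun (i : Fin (m+1)) (o : Option (Fin k)) => chi (o.elim 0 (fun a => w (i,a))))]
      have h2 : ∀ i : Fin (m+1), (∑ o : Option (Fin k), chi (o.elim 0 (fun a => w (i,a))))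
          = 1 + ∑ a, chi (w (i,a)) := by
        intro i
        rw [sum_option_real (fun o => chi (o.elim 0 (fun a => w (i,a))))]
        simp [chi_zero]
      rw [Finset.prod_congr rfl fun i _ => h2 i, nsmul_eq_mul, mul_one]
      push_cast
      ring
    have habsi : ∀ i : Fin (m+1), |1 + ∑ a, chi (w (i,a))|
        ≤ ((k:ℝ)+1) * (if (∃ a, w (i,a) ≠ 0) then θ else 1) := by
      intro i
      have hsumchi : ∑ a, chi (w (i,a))
          = (k:ℝ) - 2 * (((Finset.univ.filter (fun a : Fin k => w (i,a) ≠ 0)).card : ℕ):ℝ) := by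
        rw [Finset.sum_congr rfl fun a _ => chi_eq (w (i,a)), Finset.sum_sub_distrib,
          Finset.sum_const, Finset.card_univ, Fintype.card_fin, ← Finset.mul_sum]
        congr 1
        · simp
        · congr 1
          have h3 : ∀ a : Fin k, (if w (i,a) = 0 then (0:ℝ) else 1)
              = if w (i,a) ≠ 0 then (1:ℝ) else 0 := by
            intro a; split_ifs with h h' h' <;> first | rfl | tauto
          rw [Finset.sum_congr rfl fun a _ => h3 a, Finset.sum_boole]
      have hrk : ((Finset.univ.filter (fun a : Fin k => w (i,a) ≠ 0)).card : ℕ) ≤ k :=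
        le_trans (Finset.card_filter_le _ _) (by simp)
      have hrk' : (((Finset.univ.filter (fun a : Fin k => w (i,a) ≠ 0)).card : ℕ):ℝ)
          ≤ (k:ℝ) := by exact_mod_cast hrk
      split_ifs with hex
      · obtain ⟨a, ha⟩ := hex
        have hr1 : 1 ≤ ((Finset.univ.filter (fun a : Fin k => w (i,a) ≠ 0)).card : ℕ) :=
          Finset.card_pos.mpr ⟨a, Finset.mem_filter.mpr ⟨Finset.mem_univ a, ha⟩⟩
        have hr1' : (1:ℝ) ≤ (((Finset.univ.filter
            (fun a : Fin k => w (i,a) ≠ 0)).card : ℕ):ℝ) := by exact_mod_cast hr1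
        have hθk : ((k:ℝ)+1)*θ = (k:ℝ)-1 := by
          rw [hθdef]; field_simp
        rw [hsumchi, hθk, abs_le]
        constructor <;> linarith only [hr1', hrk']
      · push_neg at hex
        have h4 : ∀ a : Fin k, chi (w (i,a)) = 1 := fun a => by rw [hex a, chi_zero]
        rw [Finset.sum_congr rfl fun a _ => h4 a, Finset.sum_const, Finset.card_univ,
          Fintype.card_fin, nsmul_eq_mul, mul_one, mul_one,
          abs_of_nonneg (by positivity)]
        linarith only []
    have hprodabs : ∏ i : Fin (m+1), (1 + ∑ a, chi (w (i,a)))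
        ≤ (((k:ℝ)+1)^(m+1)) * θ^(sfun w) := by
      calc ∏ i : Fin (m+1), (1 + ∑ a, chi (w (i,a)))
          ≤ |∏ i : Fin (m+1), (1 + ∑ a, chi (w (i,a)))| := le_abs_self _
        _ = ∏ i : Fin (m+1), |1 + ∑ a, chi (w (i,a))| := Finset.abs_prod _ _
        _ ≤ ∏ i : Fin (m+1), (((k:ℝ)+1) * (if (∃ a, w (i,a) ≠ 0) then θ else 1)) :=
            Finset.prod_le_prod (fun i _ => abs_nonneg _) (fun i _ => habsi i)
        _ = (((k:ℝ)+1)^(m+1)) * θ^(sfun w) := by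
            rw [Finset.prod_mul_distrib, Finset.prod_const, Finset.card_univ,
              Fintype.card_fin, Finset.prod_ite, Finset.prod_const,
              Finset.prod_const_one, mul_one]
    have hθmin : θ^(sfun w) ≤ θ^(min (sfun w) s₀) :=
      pow_le_pow_of_le_one hθ0 hθ1.le (min_le_left _ _)
    have hkp : (0:ℝ) < ((k:ℝ)+1)^(m+1) := by positivity
    have hbound : ((((k:ℝ)+1)^(m+1)) + ∏ i : Fin (m+1), (1 + ∑ a, chi (w (i,a))))/2
        ≤ (((k:ℝ)+1)^(m+1)) * ((1 + θ^(min (sfun w) s₀))/2) := by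
      have h5 := le_trans hprodabs (mul_le_mul_of_nonneg_left hθmin hkp.le)
      rw [show (((k:ℝ)+1)^(m+1)) * ((1 + θ^(min (sfun w) s₀))/2)
        = ((((k:ℝ)+1)^(m+1)) + (((k:ℝ)+1)^(m+1)) * θ^(min (sfun w) s₀))/2 from by ring]
      linarith only [h5]
    have h6 : ∀ ω : (Fin (m+1) × Fin (n-k)) → (Fin (m+1) → Option (Fin k)),
        (if Matrix.vecMul w (Gm ω) = 0 then (1:ℝ) else 0)
        = ∏ c : Fin (m+1) × Fin (n-k),
            (if (∑ i : Fin (m+1), ((ω c i).elim 0 (fun a => w (i,a)))) = (0:ZMod 2)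
              then (1:ℝ) else 0) := by
      intro ω
      rw [hindprod (Gm ω) w]
      exact Finset.prod_congr rfl fun c _ => by rw [hcol w ω c]
    rw [Finset.sum_congr rfl fun ω _ => h6 ω,
      sum_pi_prod (fun (_c : Fin (m+1) × Fin (n-k)) (f : Fin (m+1) → Option (Fin k)) =>
        (if (∑ i : Fin (m+1), ((f i).elim 0 (fun a => w (i,a)))) = (0:ZMod 2)
          then (1:ℝ) else 0)),
      Finset.prod_const, Finset.card_univ]
    have hcard2 : Fintype.card (Fin (m+1) × Fin (n-k)) = (m+1)*(n-k) := by simp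
    have hcardΩ : (Fintype.card ((Fin (m+1) × Fin (n-k)) →
        (Fin (m+1) → Option (Fin k))) : ℝ)
        = ((((k:ℝ)+1)^(m+1)))^((m+1)*(n-k)) := by
      rw [Fintype.card_fun]
      have : Fintype.card (Fin (m+1) → Option (Fin k)) = (k+1)^(m+1) := by
        rw [Fintype.card_fun]; simp
      rw [this, hcard2]
      push_cast
      ring
    rw [hcard2, hfsum, hcardΩ, ← mul_pow]
    have h7 : (0:ℝ) ≤ ((((k:ℝ)+1)^(m+1)) + ∏ i : Fin (m+1), (1 + ∑ a, chi (w (i,a))))/2 := by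
      rw [← hfsum]
      exact Finset.sum_nonneg fun f _ => by split_ifs <;> norm_num
    exact pow_le_pow_left₀ h7 hbound _
  -- ==================== expected union bound ====================
  have part1 : ∑ w ∈ Finset.univ.filter
        (fun w : (Fin (m+1) × Fin k) → ZMod 2 => w ≠ 0),
      (if sfun w < s₀ then ρ₁^(m+1) else (0:ℝ)) ≤ T2 m := by
    have hext : ∑ w ∈ Finset.univ.filter
          (fun w : (Fin (m+1) × Fin k) → ZMod 2 => w ≠ 0),
        (if sfun w < s₀ then ρ₁^(m+1) else (0:ℝ))
        ≤ ∑ w : (Fin (m+1) × Fin k) → ZMod 2,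
          (if sfun w < s₀ then ρ₁^(m+1) else (0:ℝ)) :=
      Finset.sum_le_sum_of_subset_of_nonneg (Finset.filter_subset _ _)
        (fun w _ _ => by split_ifs <;> positivity)
    have hy0 : (0:ℝ) < (((m+1:ℕ)):ℝ)⁻¹ := by positivity
    have hy1 : (((m+1:ℕ)):ℝ)⁻¹ ≤ 1 := by
      apply inv_le_one_of_one_le₀
      exact_mod_cast Nat.one_le_iff_ne_zero.mpr (Nat.succ_ne_zero m)
    have hgen : ∑ w : (Fin (m+1) × Fin k) → ZMod 2, ((((m+1:ℕ)):ℝ)⁻¹)^(sfun w)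
        = (1 + ((2:ℝ)^k - 1)*(((m+1:ℕ)):ℝ)⁻¹)^(m+1) := by
      rw [← Equiv.sum_comp (Equiv.curry (Fin (m+1)) (Fin k) (ZMod 2)).symm
        (fun w => ((((m+1:ℕ)):ℝ)⁻¹)^(sfun w))]
      have h4 : ∀ W : Fin (m+1) → (Fin k → ZMod 2),
          ((((m+1:ℕ)):ℝ)⁻¹)^(sfun ((Equiv.curry (Fin (m+1)) (Fin k) (ZMod 2)).symm W))
          = ∏ i : Fin (m+1), (if W i = 0 then (1:ℝ) else (((m+1:ℕ)):ℝ)⁻¹) := by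
        intro W
        have h5 : sfun ((Equiv.curry (Fin (m+1)) (Fin k) (ZMod 2)).symm W)
            = (Finset.univ.filter (fun i : Fin (m+1) => ¬ (W i = 0))).card := by
          simp only [hsfundef]
          congr 1
          apply Finset.filter_congr
          intro i _
          constructor
          · rintro ⟨a, ha⟩ h0
            exact ha (congrFun h0 a)
          · intro hne
            have hne' : W i ≠ 0 := hne
            obtain ⟨a, ha⟩ := Function.ne_iff.mp hne'
            exact ⟨a, ha⟩
        rw [h5, Finset.prod_ite, Finset.prod_const, Finset.prod_const, one_pow,
          one_mul]
      rw [Finset.sum_congr rfl fun W _ => h4 W,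
        sum_pi_prod (fun (_i : Fin (m+1)) (g : Fin k → ZMod 2) =>
          (if g = 0 then (1:ℝ) else (((m+1:ℕ)):ℝ)⁻¹))]
      have h6 : ∑ g : Fin k → ZMod 2, (if g = 0 then (1:ℝ) else (((m+1:ℕ)):ℝ)⁻¹)
          = 1 + ((2:ℝ)^k - 1)*(((m+1:ℕ)):ℝ)⁻¹ := by
        have h7 : ∀ g : Fin k → ZMod 2, (if g = 0 then (1:ℝ) else (((m+1:ℕ)):ℝ)⁻¹)
            = (((m+1:ℕ)):ℝ)⁻¹ + (if g = 0 then 1 - (((m+1:ℕ)):ℝ)⁻¹ else 0) := by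
          intro g; split_ifs <;> ring
        rw [Finset.sum_congr rfl fun g _ => h7 g, Finset.sum_add_distrib,
          Finset.sum_const, Finset.card_univ,
          Finset.sum_ite_eq' Finset.univ (0 : Fin k → ZMod 2)
            (fun _ => 1 - (((m+1:ℕ)):ℝ)⁻¹), if_pos (Finset.mem_univ _)]
        have h8 : Fintype.card (Fin k → ZMod 2) = 2^k := by
          rw [Fintype.card_fun]
          simp
        rw [h8, nsmul_eq_mul]
        push_cast
        ring
      rw [Finset.prod_congr rfl fun i _ => h6, Finset.prod_const, Finset.card_univ,
        Fintype.card_fin]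
    have hcount : ∑ w : (Fin (m+1) × Fin k) → ZMod 2,
        (if sfun w < s₀ then (1:ℝ) else 0)
        ≤ (((m+1:ℕ)):ℝ)^(s₀-1) * Real.exp ((2:ℝ)^k - 1) := by
      have hptw : ∀ w : (Fin (m+1) × Fin k) → ZMod 2,
          (if sfun w < s₀ then (1:ℝ) else 0)
          ≤ (((m+1:ℕ)):ℝ)^(s₀-1) * ((((m+1:ℕ)):ℝ)⁻¹)^(sfun w) := by
        intro w
        split_ifs with hc
        · have h1 : ((((m+1:ℕ)):ℝ)⁻¹)^(s₀-1) ≤ ((((m+1:ℕ)):ℝ)⁻¹)^(sfun w) :=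
            pow_le_pow_of_le_one hy0.le hy1 (by omega)
          have h2 : (((m+1:ℕ)):ℝ)^(s₀-1) * ((((m+1:ℕ)):ℝ)⁻¹)^(s₀-1) = 1 := by
            rw [← mul_pow, mul_inv_cancel₀ (by positivity), one_pow]
          calc (1:ℝ) = (((m+1:ℕ)):ℝ)^(s₀-1) * ((((m+1:ℕ)):ℝ)⁻¹)^(s₀-1) := h2.symm
            _ ≤ _ := mul_le_mul_of_nonneg_left h1 (by positivity)
        · positivity
      have h2k : (0:ℝ) ≤ (2:ℝ)^k - 1 := by
        have h1 : (1:ℝ) ≤ (2:ℝ)^k := by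
          calc (1:ℝ) = 1^k := (one_pow k).symm
            _ ≤ (2:ℝ)^k := pow_le_pow_left₀ zero_le_one one_le_two k
        linarith
      calc ∑ w : (Fin (m+1) × Fin k) → ZMod 2, (if sfun w < s₀ then (1:ℝ) else 0)
          ≤ ∑ w : (Fin (m+1) × Fin k) → ZMod 2,
            (((m+1:ℕ)):ℝ)^(s₀-1) * ((((m+1:ℕ)):ℝ)⁻¹)^(sfun w) :=
            Finset.sum_le_sum fun w _ => hptw w
        _ = (((m+1:ℕ)):ℝ)^(s₀-1) * ∑ w : (Fin (m+1) × Fin k) → ZMod 2,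
            ((((m+1:ℕ)):ℝ)⁻¹)^(sfun w) := by rw [Finset.mul_sum]
        _ = (((m+1:ℕ)):ℝ)^(s₀-1) * (1 + ((2:ℝ)^k - 1)*(((m+1:ℕ)):ℝ)⁻¹)^(m+1) := by
            rw [hgen]
        _ ≤ (((m+1:ℕ)):ℝ)^(s₀-1) * Real.exp ((2:ℝ)^k - 1) := by
            apply mul_le_mul_of_nonneg_left ?_ (by positivity)
            have h3 : (1 + ((2:ℝ)^k - 1)*(((m+1:ℕ)):ℝ)⁻¹)
                ≤ Real.exp (((2:ℝ)^k - 1)*(((m+1:ℕ)):ℝ)⁻¹) := by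
              have h := Real.add_one_le_exp (((2:ℝ)^k - 1)*(((m+1:ℕ)):ℝ)⁻¹)
              linarith only [h]
            calc (1 + ((2:ℝ)^k - 1)*(((m+1:ℕ)):ℝ)⁻¹)^(m+1)
                ≤ (Real.exp (((2:ℝ)^k - 1)*(((m+1:ℕ)):ℝ)⁻¹))^(m+1) :=
                  pow_le_pow_left₀ (by positivity) h3 _
              _ = Real.exp ((((m+1:ℕ)):ℝ) * (((2:ℝ)^k - 1)*(((m+1:ℕ)):ℝ)⁻¹)) := by
                  rw [Real.exp_nat_mul]
              _ = Real.exp ((2:ℝ)^k - 1) := by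
                  congr 1
                  rw [show (((m+1:ℕ)):ℝ) * (((2:ℝ)^k - 1)*(((m+1:ℕ)):ℝ)⁻¹)
                    = ((2:ℝ)^k - 1) * ((((m+1:ℕ)):ℝ) * (((m+1:ℕ)):ℝ)⁻¹) from by ring,
                    mul_inv_cancel₀ (by positivity), mul_one]
    calc ∑ w ∈ Finset.univ.filter (fun w : (Fin (m+1) × Fin k) → ZMod 2 => w ≠ 0),
        (if sfun w < s₀ then ρ₁^(m+1) else (0:ℝ))
        ≤ ∑ w : (Fin (m+1) × Fin k) → ZMod 2,
          (if sfun w < s₀ then ρ₁^(m+1) else (0:ℝ)) := hext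
      _ = ρ₁^(m+1) * ∑ w : (Fin (m+1) × Fin k) → ZMod 2,
          (if sfun w < s₀ then (1:ℝ) else 0) := by
          rw [Finset.mul_sum]
          exact Finset.sum_congr rfl fun w _ => by split_ifs <;> ring
      _ ≤ ρ₁^(m+1) * ((((m+1:ℕ)):ℝ)^(s₀-1) * Real.exp ((2:ℝ)^k - 1)) :=
          mul_le_mul_of_nonneg_left hcount (by positivity)
      _ = T2 m := by simp only [hT2def]; ring
  have part2 : ∑ w ∈ Finset.univ.filter
        (fun w : (Fin (m+1) × Fin k) → ZMod 2 => w ≠ 0),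
      ((1+ν)/2)^((m+1)*(n-k)) * (A⁻¹ * ∏ i, (if w i = 0 then β else α)) ≤ T3 m := by
    have hext : ∑ w ∈ Finset.univ.filter
          (fun w : (Fin (m+1) × Fin k) → ZMod 2 => w ≠ 0),
        ((1+ν)/2)^((m+1)*(n-k)) * (A⁻¹ * ∏ i, (if w i = 0 then β else α))
        ≤ ∑ w : (Fin (m+1) × Fin k) → ZMod 2,
          ((1+ν)/2)^((m+1)*(n-k)) * (A⁻¹ * ∏ i, (if w i = 0 then β else α)) :=
      Finset.sum_le_sum_of_subset_of_nonneg (Finset.filter_subset _ _)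
        (fun w _ _ => mul_nonneg (by positivity)
          (mul_nonneg (inv_nonneg.mpr hA0.le) (hprodif0 w)))
    have hsum2 : ∑ w : (Fin (m+1) × Fin k) → ZMod 2,
        ∏ i, (if w i = 0 then β else α) = 2^((m+1)*k) := by
      rw [sum_pi_prod (fun (_i : Fin (m+1) × Fin k) (x : ZMod 2) =>
        (if x = 0 then β else α))]
      have h7 : ∑ x : ZMod 2, (if x = 0 then β else α) = 2 := by
        have h8 : ∀ x : ZMod 2, (if x = 0 then β else α)
            = α + (if x = 0 then β - α else 0) := fun x => by split_ifs <;> ring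
        rw [Finset.sum_congr rfl fun x _ => h8 x, Finset.sum_add_distrib,
          Finset.sum_const, Finset.card_univ,
          Finset.sum_ite_eq' Finset.univ (0:ZMod 2) (fun _ => β - α),
          if_pos (Finset.mem_univ _)]
        have h9 : Fintype.card (ZMod 2) = 2 := by simp
        rw [h9, nsmul_eq_mul]
        push_cast
        linarith only [hαβ]
      rw [Finset.prod_congr rfl fun i _ => h7, Finset.prod_const, Finset.card_univ,
        hKrcard]
    have key : ((1+ν)/2)^((m+1)*(n-k)) * A⁻¹ * 2^((m+1)*k) = T3 m := by
      simp only [hT3def, hζdef, hAdef]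
      have e1 : ((1+ν)/2)^((m+1)*(n-k)) = (((1+ν)/2)^(n-k))^(m+1) := by
        rw [mul_comm, pow_mul]
      have e2 : ((2:ℝ)^((((m+1)*k:ℕ):ℝ)*(C-δ)))⁻¹ * (2:ℝ)^((m+1)*k)
          = ((2:ℝ)^((k:ℝ)*(1-C+δ)))^(m+1) := by
        rw [← Real.rpow_natCast 2 ((m+1)*k), ← Real.rpow_neg (le_of_lt two_pos),
          ← Real.rpow_add two_pos,
          ← Real.rpow_natCast ((2:ℝ)^((k:ℝ)*(1-C+δ))) (m+1),
          ← Real.rpow_mul (le_of_lt two_pos)]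
        congr 1
        push_cast
        ring
      rw [mul_assoc, e2, e1, ← mul_pow]
    calc ∑ w ∈ Finset.univ.filter (fun w : (Fin (m+1) × Fin k) → ZMod 2 => w ≠ 0),
        ((1+ν)/2)^((m+1)*(n-k)) * (A⁻¹ * ∏ i, (if w i = 0 then β else α))
        ≤ ∑ w : (Fin (m+1) × Fin k) → ZMod 2,
          ((1+ν)/2)^((m+1)*(n-k)) * (A⁻¹ * ∏ i, (if w i = 0 then β else α)) := hext
      _ = ((1+ν)/2)^((m+1)*(n-k)) * A⁻¹ * ∑ w : (Fin (m+1) × Fin k) → ZMod 2,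
          ∏ i, (if w i = 0 then β else α) := by
          rw [Finset.mul_sum]
          exact Finset.sum_congr rfl fun w _ => by ring
      _ = ((1+ν)/2)^((m+1)*(n-k)) * A⁻¹ * 2^((m+1)*k) := by rw [hsum2]
      _ = T3 m := key
  have hEB : ∑ ω : (Fin (m+1) × Fin (n-k)) → (Fin (m+1) → Option (Fin k)), BB (Gm ω)
      ≤ (Fintype.card ((Fin (m+1) × Fin (n-k)) → (Fin (m+1) → Option (Fin k))) : ℝ)
        * (T2 m + T3 m) := by
    have hswap : ∑ ω : (Fin (m+1) × Fin (n-k)) → (Fin (m+1) → Option (Fin k)), BB (Gm ω)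
        = ∑ w ∈ Finset.univ.filter (fun w : (Fin (m+1) × Fin k) → ZMod 2 => w ≠ 0),
            qbar w * ∑ ω : (Fin (m+1) × Fin (n-k)) → (Fin (m+1) → Option (Fin k)),
              (if Matrix.vecMul w (Gm ω) = 0 then (1:ℝ) else 0) := by
      simp only [hBBdef]
      rw [Finset.sum_comm]
      refine Finset.sum_congr rfl fun w _ => ?_
      rw [Finset.mul_sum]
      exact Finset.sum_congr rfl fun ω _ => by ring
    rw [hswap]
    have hperw : ∀ w ∈ Finset.univ.filter
        (fun w : (Fin (m+1) × Fin k) → ZMod 2 => w ≠ 0),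
        qbar w * ∑ ω : (Fin (m+1) × Fin (n-k)) → (Fin (m+1) → Option (Fin k)),
          (if Matrix.vecMul w (Gm ω) = 0 then (1:ℝ) else 0)
        ≤ (Fintype.card ((Fin (m+1) × Fin (n-k)) → (Fin (m+1) → Option (Fin k))) : ℝ)
          * ((if sfun w < s₀ then ρ₁^(m+1) else (0:ℝ))
            + ((1+ν)/2)^((m+1)*(n-k)) * (A⁻¹ * ∏ i, (if w i = 0 then β else α))) := by
      intro w hw
      have hw0 : w ≠ 0 := (Finset.mem_filter.mp hw).2
      have hs1 : 1 ≤ sfun w := by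
        have hex : ∃ p : Fin (m+1) × Fin k, w p ≠ 0 := by
          by_contra h; push_neg at h; exact hw0 (funext fun p => h p)
        obtain ⟨⟨i, a⟩, hp⟩ := hex
        simp only [hsfundef]
        exact Finset.card_pos.mpr
          ⟨i, Finset.mem_filter.mpr ⟨Finset.mem_univ i, ⟨a, hp⟩⟩⟩
      have hind0 : (0:ℝ) ≤ ∑ ω : (Fin (m+1) × Fin (n-k)) → (Fin (m+1) → Option (Fin k)),
          (if Matrix.vecMul w (Gm ω) = 0 then (1:ℝ) else 0) :=
        Finset.sum_nonneg fun ω _ => by split_ifs <;> norm_num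
      have hcΩ : (0:ℝ) ≤ (Fintype.card ((Fin (m+1) × Fin (n-k)) →
          (Fin (m+1) → Option (Fin k))) : ℝ) := Nat.cast_nonneg _
      by_cases hc : sfun w < s₀
      · have hq : qbar w = 1 := by simp only [hqbardef]; rw [if_pos hc]
        rw [hq, one_mul]
        have hmin : min (sfun w) s₀ = sfun w := min_eq_left (le_of_lt hc)
        have hb1 : (1 + θ^(sfun w))/2 ≤ (1+θ)/2 := by
          have h1 := pow_le_pow_of_le_one hθ0 hθ1.le hs1
          rw [pow_one] at h1
          linarith only [h1]
        have hb2 : ((1 + θ^(min (sfun w) s₀))/2)^((m+1)*(n-k)) ≤ ρ₁^(m+1) := by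
          rw [hmin]
          calc ((1 + θ^(sfun w))/2)^((m+1)*(n-k))
              ≤ ((1+θ)/2)^((m+1)*(n-k)) := pow_le_pow_left₀ (by positivity) hb1 _
            _ = ρ₁^(m+1) := by rw [hρ₁def, mul_comm (m+1) (n-k), pow_mul]
        calc ∑ ω : (Fin (m+1) × Fin (n-k)) → (Fin (m+1) → Option (Fin k)),
            (if Matrix.vecMul w (Gm ω) = 0 then (1:ℝ) else 0)
            ≤ (Fintype.card ((Fin (m+1) × Fin (n-k)) →
                (Fin (m+1) → Option (Fin k))) : ℝ)
              * ((1 + θ^(min (sfun w) s₀))/2)^((m+1)*(n-k)) := hPrw w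
          _ ≤ (Fintype.card ((Fin (m+1) × Fin (n-k)) →
                (Fin (m+1) → Option (Fin k))) : ℝ) * ρ₁^(m+1) :=
              mul_le_mul_of_nonneg_left hb2 hcΩ
          _ ≤ _ := by
              rw [if_pos hc]
              have h2 : (0:ℝ) ≤ ((1+ν)/2)^((m+1)*(n-k))
                  * (A⁻¹ * ∏ i, (if w i = 0 then β else α)) :=
                mul_nonneg (by positivity)
                  (mul_nonneg (inv_nonneg.mpr hA0.le) (hprodif0 w))
              exact mul_le_mul_of_nonneg_left (by linarith only [h2]) hcΩ
      · have hq : qbar w = A⁻¹ * ∏ i, (if w i = 0 then β else α) := by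
          simp only [hqbardef]; rw [if_neg hc]
        have hmin : min (sfun w) s₀ = s₀ := min_eq_right (le_of_not_gt hc)
        have hq0 : (0:ℝ) ≤ A⁻¹ * ∏ i, (if w i = 0 then β else α) :=
          mul_nonneg (inv_nonneg.mpr hA0.le) (hprodif0 w)
        rw [hq]
        calc (A⁻¹ * ∏ i, (if w i = 0 then β else α))
            * ∑ ω : (Fin (m+1) × Fin (n-k)) → (Fin (m+1) → Option (Fin k)),
              (if Matrix.vecMul w (Gm ω) = 0 then (1:ℝ) else 0)
            ≤ (A⁻¹ * ∏ i, (if w i = 0 then β else α))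
              * ((Fintype.card ((Fin (m+1) × Fin (n-k)) →
                  (Fin (m+1) → Option (Fin k))) : ℝ)
                * ((1 + θ^(min (sfun w) s₀))/2)^((m+1)*(n-k))) :=
              mul_le_mul_of_nonneg_left (hPrw w) hq0
          _ = (Fintype.card ((Fin (m+1) × Fin (n-k)) →
                (Fin (m+1) → Option (Fin k))) : ℝ)
              * (((1+ν)/2)^((m+1)*(n-k)) * (A⁻¹ * ∏ i, (if w i = 0 then β else α))) := by
              rw [hmin, hνdef]
              ring
          _ ≤ _ := by
              rw [if_neg hc, zero_add]
    calc ∑ w ∈ Finset.univ.filter (fun w : (Fin (m+1) × Fin k) → ZMod 2 => w ≠ 0),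
        qbar w * ∑ ω : (Fin (m+1) × Fin (n-k)) → (Fin (m+1) → Option (Fin k)),
          (if Matrix.vecMul w (Gm ω) = 0 then (1:ℝ) else 0)
        ≤ ∑ w ∈ Finset.univ.filter (fun w : (Fin (m+1) × Fin k) → ZMod 2 => w ≠ 0),
          (Fintype.card ((Fin (m+1) × Fin (n-k)) → (Fin (m+1) → Option (Fin k))) : ℝ)
            * ((if sfun w < s₀ then ρ₁^(m+1) else (0:ℝ))
              + ((1+ν)/2)^((m+1)*(n-k)) * (A⁻¹ * ∏ i, (if w i = 0 then β else α))) :=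
          Finset.sum_le_sum hperw
      _ = (Fintype.card ((Fin (m+1) × Fin (n-k)) → (Fin (m+1) → Option (Fin k))) : ℝ)
          * ((∑ w ∈ Finset.univ.filter
              (fun w : (Fin (m+1) × Fin k) → ZMod 2 => w ≠ 0),
              (if sfun w < s₀ then ρ₁^(m+1) else (0:ℝ)))
            + ∑ w ∈ Finset.univ.filter
              (fun w : (Fin (m+1) × Fin k) → ZMod 2 => w ≠ 0),
              ((1+ν)/2)^((m+1)*(n-k)) * (A⁻¹ * ∏ i, (if w i = 0 then β else α))) := by
          rw [← Finset.mul_sum, ← Finset.sum_add_distrib]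
      _ ≤ _ := by
          apply mul_le_mul_of_nonneg_left (add_le_add part1 part2) (Nat.cast_nonneg _)
  -- choose a good ensemble member
  obtain ⟨ω, -, hω⟩ : ∃ ω ∈ (Finset.univ : Finset ((Fin (m+1) × Fin (n-k)) →
      (Fin (m+1) → Option (Fin k)))), BB (Gm ω) ≤ T2 m + T3 m := by
    apply Finset.exists_le_of_sum_le Finset.univ_nonempty
    calc ∑ ω : (Fin (m+1) × Fin (n-k)) → (Fin (m+1) → Option (Fin k)), BB (Gm ω)
        ≤ (Fintype.card ((Fin (m+1) × Fin (n-k)) →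
            (Fin (m+1) → Option (Fin k))) : ℝ) * (T2 m + T3 m) := hEB
      _ = ∑ _ω : (Fin (m+1) × Fin (n-k)) → (Fin (m+1) → Option (Fin k)),
          (T2 m + T3 m) := by
          rw [Finset.sum_const, Finset.card_univ, nsmul_eq_mul]
  set G := Gm ω with hGdef
  set ψ : ((Fin (m+1) × Fin k) → 𝒴) → ((Fin (m+1) × Fin k) → ZMod 2) :=
    fun v => if h : ∃! c : (Fin (m+1) × Fin k) → ZMod 2,
        (Matrix.vecMul c G = 0 ∧ A ≤ L c v) then h.choose else 0 with hψdef
  refine ⟨G, ψ, ?_, ?_, ?_⟩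
  · -- support of the RaS ensemble
    intro i j b
    cases hoc : ω (j, b) i with
    | none =>
        have hempty : Finset.univ.filter (fun a : Fin k => G (i, a) (j, b) = 1) = ∅ := by
          rw [Finset.filter_eq_empty_iff]
          intro a _
          simp only [hGdef, hGmdef]
          rw [hoc]
          simp
        rw [hempty]
        simp
    | some a₀ =>
        have hsub : Finset.univ.filter (fun a : Fin k => G (i, a) (j, b) = 1)
            ⊆ {a₀} := by
          intro a ha
          rw [Finset.mem_filter] at ha
          rw [Finset.mem_singleton]
          by_contra hne
          have hGa : G (i,a) (j,b) = 0 := by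
            simp only [hGdef, hGmdef]
            rw [hoc, if_neg (fun h => hne (Option.some.inj h).symm)]
          rw [hGa] at ha
          exact (by decide : (0:ZMod 2) ≠ 1) ha.2
        calc (Finset.univ.filter (fun a : Fin k => G (i, a) (j, b) = 1)).card
            ≤ ({a₀} : Finset (Fin k)).card := Finset.card_le_card hsub
          _ = 1 := Finset.card_singleton a₀
  · -- dimension bound
    haveI : Fact (Nat.Prime 2) := ⟨Nat.prime_two⟩
    have h1 := LinearMap.finrank_range_add_finrank_ker (Matrix.vecMulLinear G)
    have h2 : Module.finrank (ZMod 2) ((Fin (m+1) × Fin k) → ZMod 2) = (m+1)*k := by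
      rw [Module.finrank_pi]; simp
    have h3 : Module.finrank (ZMod 2)
        (LinearMap.range (Matrix.vecMulLinear G)) ≤ (m+1)*(n-k) := by
      calc Module.finrank (ZMod 2) (LinearMap.range (Matrix.vecMulLinear G))
          ≤ Module.finrank (ZMod 2) ((Fin (m+1) × Fin (n-k)) → ZMod 2) :=
            Submodule.finrank_le _
        _ = (m+1)*(n-k) := by rw [Module.finrank_pi]; simp
    rw [h2] at h1
    have h4 : (2*k - n)*(m+1) + (m+1)*(n-k) = (m+1)*k := by
      have h5 : (2*k - n) + (n - k) = k := by omega
      calc (2*k-n)*(m+1) + (m+1)*(n-k) = ((2*k-n) + (n-k))*(m+1) := by ring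
        _ = k*(m+1) := by rw [h5]
        _ = (m+1)*k := by ring
    have h6 : (2*k-n)*(m+1) + (m+1)*(n-k)
        ≤ Module.finrank (ZMod 2) (LinearMap.ker (Matrix.vecMulLinear G))
          + (m+1)*(n-k) := by
      rw [h4, ← h1]
      rw [add_comm]
      exact Nat.add_le_add_left h3 _
    exact Nat.le_of_add_le_add_right h6
  · -- error probability
    have hmemcode : ∀ u : (Fin (m+1) × Fin k) → ZMod 2, Matrix.vecMul u G = 0 →
        ∀ v : (Fin (m+1) × Fin k) → 𝒴, (if ψ v ≠ u then (1:ℝ) else 0)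
          ≤ (if A ≤ L u v then 0 else 1)
            + ∑ w ∈ Finset.univ.filter
                (fun w : (Fin (m+1) × Fin k) → ZMod 2 => w ≠ 0),
                (if (Matrix.vecMul w G = 0 ∧ A ≤ L (u + w) v) then (1:ℝ) else 0) := by
      intro u hu v
      have hsum0 : (0:ℝ) ≤ ∑ w ∈ Finset.univ.filter
          (fun w : (Fin (m+1) × Fin k) → ZMod 2 => w ≠ 0),
          (if (Matrix.vecMul w G = 0 ∧ A ≤ L (u + w) v) then (1:ℝ) else 0) :=
        Finset.sum_nonneg fun w _ => by split_ifs <;> norm_num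
      by_cases hL : A ≤ L u v
      · rw [if_pos hL]
        by_cases hpsi : ψ v = u
        · rw [if_neg (fun h => h hpsi)]
          linarith only [hsum0]
        · rw [if_pos hpsi]
          have hex : ∃ c : (Fin (m+1) × Fin k) → ZMod 2,
              c ≠ u ∧ Matrix.vecMul c G = 0 ∧ A ≤ L c v := by
            by_contra hno
            push_neg at hno
            have huniq : ∃! c : (Fin (m+1) × Fin k) → ZMod 2,
                (Matrix.vecMul c G = 0 ∧ A ≤ L c v) := by
              refine ⟨u, ⟨hu, hL⟩, ?_⟩
              intro c hc
              by_contra hne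
              exact absurd hc.2 (not_le.mpr (hno c hne hc.1))
            apply hpsi
            simp only [hψdef]
            rw [dif_pos huniq]
            exact (huniq.choose_spec.2 u ⟨hu, hL⟩).symm
          obtain ⟨c, hcne, hc0, hcL⟩ := hex
          have haddsub : u + (c - u) = c := by abel
          have hwterm : (if (Matrix.vecMul (c - u) G = 0 ∧ A ≤ L (u + (c - u)) v)
              then (1:ℝ) else 0) = 1 := by
            rw [if_pos]
            constructor
            · rw [Matrix.sub_vecMul, hc0, hu, sub_zero]
            · rw [haddsub]; exact hcL
          have hmem : c - u ∈ Finset.univ.filter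
              (fun w : (Fin (m+1) × Fin k) → ZMod 2 => w ≠ 0) :=
            Finset.mem_filter.mpr ⟨Finset.mem_univ _, sub_ne_zero.mpr hcne⟩
          have hsingle : (if (Matrix.vecMul (c - u) G = 0 ∧ A ≤ L (u + (c - u)) v)
              then (1:ℝ) else 0) ≤ ∑ w ∈ Finset.univ.filter
                (fun w : (Fin (m+1) × Fin k) → ZMod 2 => w ≠ 0),
                (if (Matrix.vecMul w G = 0 ∧ A ≤ L (u + w) v) then (1:ℝ) else 0) :=
            Finset.single_le_sum
              (f := fun w => (if (Matrix.vecMul w G = 0 ∧ A ≤ L (u + w) v)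
                then (1:ℝ) else 0))
              (fun w _ => by split_ifs <;> norm_num) hmem
          rw [hwterm] at hsingle
          linarith only [hsingle, hsum0]
      · rw [if_neg hL]
        have h1 : (if ψ v ≠ u then (1:ℝ) else 0) ≤ 1 := by split_ifs <;> norm_num
        linarith only [h1, hsum0]
    have percode : ∀ u : (Fin (m+1) × Fin k) → ZMod 2, Matrix.vecMul u G = 0 →
        ∑ v : (Fin (m+1) × Fin k) → 𝒴,
          μ u v * (if ψ v ≠ u then (1:ℝ) else 0) ≤ T1 m + BB G := by
      intro u hu
      calc ∑ v : (Fin (m+1) × Fin k) → 𝒴, μ u v * (if ψ v ≠ u then (1:ℝ) else 0)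
          ≤ ∑ v : (Fin (m+1) × Fin k) → 𝒴, (μ u v * (if A ≤ L u v then 0 else 1)
              + ∑ w ∈ Finset.univ.filter
                  (fun w : (Fin (m+1) × Fin k) → ZMod 2 => w ≠ 0),
                  μ u v * (if (Matrix.vecMul w G = 0 ∧ A ≤ L (u+w) v)
                    then (1:ℝ) else 0)) := by
            refine Finset.sum_le_sum fun v _ => ?_
            have h := hmemcode u hu v
            calc μ u v * (if ψ v ≠ u then (1:ℝ) else 0)
                ≤ μ u v * ((if A ≤ L u v then 0 else 1)
                  + ∑ w ∈ Finset.univ.filter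
                      (fun w : (Fin (m+1) × Fin k) → ZMod 2 => w ≠ 0),
                      (if (Matrix.vecMul w G = 0 ∧ A ≤ L (u+w) v)
                        then (1:ℝ) else 0)) :=
                mul_le_mul_of_nonneg_left h (hμ0 u v)
              _ = _ := by rw [mul_add, Finset.mul_sum]
        _ = (∑ v : (Fin (m+1) × Fin k) → 𝒴, μ u v * (if A ≤ L u v then 0 else 1))
            + ∑ w ∈ Finset.univ.filter
                (fun w : (Fin (m+1) × Fin k) → ZMod 2 => w ≠ 0),
              ∑ v : (Fin (m+1) × Fin k) → 𝒴,
                μ u v * (if (Matrix.vecMul w G = 0 ∧ A ≤ L (u+w) v)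
                  then (1:ℝ) else 0) := by
            rw [Finset.sum_add_distrib]
            congr 1
            exact Finset.sum_comm
        _ ≤ T1 m + BB G := by
            apply add_le_add (cheb u)
            simp only [hBBdef]
            refine Finset.sum_le_sum fun w _ => ?_
            have hsplit : ∀ v : (Fin (m+1) × Fin k) → 𝒴,
                μ u v * (if (Matrix.vecMul w G = 0 ∧ A ≤ L (u+w) v) then (1:ℝ) else 0)
                = (if Matrix.vecMul w G = 0 then (1:ℝ) else 0)
                  * (μ u v * (if A ≤ L (u+w) v then (1:ℝ) else 0)) := by
              intro v
              by_cases h1 : Matrix.vecMul w G = 0 <;>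
                by_cases h2 : A ≤ L (u+w) v <;> simp [h1, h2]
            rw [Finset.sum_congr rfl fun v _ => hsplit v, ← Finset.mul_sum]
            by_cases h1 : Matrix.vecMul w G = 0
            · rw [if_pos h1, one_mul, one_mul]
              exact pairb u w
            · rw [if_neg h1, zero_mul, zero_mul]
    have hzero_mem : Matrix.vecMul (0 : (Fin (m+1) × Fin k) → ZMod 2) G = 0 :=
      Matrix.zero_vecMul G
    have hcardpos : 0 < ((Finset.univ.filter
        (fun u : (Fin (m+1) × Fin k) → ZMod 2 => Matrix.vecMul u G = 0)).card) :=
      Finset.card_pos.mpr ⟨0, Finset.mem_filter.mpr ⟨Finset.mem_univ _, hzero_mem⟩⟩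
    have hcardR : ((Finset.univ.filter
        (fun u : (Fin (m+1) × Fin k) → ZMod 2 => Matrix.vecMul u G = 0)).card : ℝ) ≠ 0 := by
      exact_mod_cast hcardpos.ne'
    calc ∑ u ∈ Finset.univ.filter
          (fun u : (Fin (m+1) × Fin k) → ZMod 2 => Matrix.vecMul u G = 0),
        ∑ v : (Fin (m+1) × Fin k) → 𝒴,
          (((Finset.univ.filter (fun u : (Fin (m+1) × Fin k) → ZMod 2 =>
            Matrix.vecMul u G = 0)).card : ℝ)⁻¹ * (∏ i, P (u i) (v i)) *
            (if ψ v ≠ u then 1 else 0))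
        = ∑ u ∈ Finset.univ.filter
            (fun u : (Fin (m+1) × Fin k) → ZMod 2 => Matrix.vecMul u G = 0),
          ((Finset.univ.filter (fun u : (Fin (m+1) × Fin k) → ZMod 2 =>
            Matrix.vecMul u G = 0)).card : ℝ)⁻¹
            * ∑ v : (Fin (m+1) × Fin k) → 𝒴, μ u v * (if ψ v ≠ u then (1:ℝ) else 0) := by
          refine Finset.sum_congr rfl fun u _ => ?_
          rw [Finset.mul_sum]
          refine Finset.sum_congr rfl fun v _ => ?_
          simp only [hμdef]
          ring
      _ ≤ ∑ u ∈ Finset.univ.filter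
            (fun u : (Fin (m+1) × Fin k) → ZMod 2 => Matrix.vecMul u G = 0),
          ((Finset.univ.filter (fun u : (Fin (m+1) × Fin k) → ZMod 2 =>
            Matrix.vecMul u G = 0)).card : ℝ)⁻¹ * (T1 m + BB G) := by
          refine Finset.sum_le_sum fun u hu => ?_
          exact mul_le_mul_of_nonneg_left (percode u (Finset.mem_filter.mp hu).2)
            (inv_nonneg.mpr (Nat.cast_nonneg _))
      _ = ((Finset.univ.filter (fun u : (Fin (m+1) × Fin k) → ZMod 2 =>
            Matrix.vecMul u G = 0)).card : ℝ)
          * (((Finset.univ.filter (fun u : (Fin (m+1) × Fin k) → ZMod 2 =>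
            Matrix.vecMul u G = 0)).card : ℝ)⁻¹ * (T1 m + BB G)) := by
          rw [Finset.sum_const, nsmul_eq_mul]
      _ = T1 m + BB G := by
          rw [← mul_assoc, mul_inv_cancel₀ hcardR, one_mul]
      _ ≤ T1 m + (T2 m + T3 m) := by linarith only [hω]
      _ ≤ ε := le_of_lt (by have h := hm₀ m hm; linarith only [h])
end

section
/- For every p ∈ [0,1] and every R with 0 ≤ R < I_0(p), the partial error exponent is strictly positive: E(p,R) > 0. -/
open Finset

/-- Gallager-type function
`E_0(p,γ) = −log₂ Σ_y P(y|0)^{1/(1+γ)}·[(1−p)·P(y|0)^{1/(1+γ)} + p·P(y|1)^{1/(1+γ)}]^γ`. -/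
noncomputable def gallagerE0 {𝒴 : Type} [Fintype 𝒴] (P : ZMod 2 → 𝒴 → ℝ)
    (p γ : ℝ) : ℝ :=
  -Real.logb 2 (∑ y : 𝒴, P 0 y ^ ((1 : ℝ) / (1 + γ)) *
    ((1 - p) * P 0 y ^ ((1 : ℝ) / (1 + γ)) + p * P 1 y ^ ((1 : ℝ) / (1 + γ))) ^ γ)

/-- Partial error exponent `E(p,R) = max_{γ∈[0,1]} (E_0(p,γ) − γ·R)`. -/
noncomputable def partialErrorExponent {𝒴 : Type} [Fintype 𝒴] (P : ZMod 2 → 𝒴 → ℝ)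
    (p R : ℝ) : ℝ :=
  sSup ((fun γ => gallagerE0 P p γ - γ * R) '' Set.Icc (0 : ℝ) 1)

/-- For every `p ∈ [0,1]` and every `R` with `0 ≤ R < I_0(p)`, the partial error
exponent is strictly positive: `E(p,R) > 0`. -/
theorem partialErrorExponent_pos
    (𝒴 : Type) [Fintype 𝒴]
    (P : ZMod 2 → 𝒴 → ℝ)
    (hPpos : ∀ x y, 0 < P x y) (hPsum : ∀ x, ∑ y : 𝒴, P x y = 1)
    (p : ℝ) (hp : p ∈ Set.Icc (0 : ℝ) 1)
    (R : ℝ) (hR0 : 0 ≤ R) (hR : R < partialMI0 P p) :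
    0 < partialErrorExponent P p R := by
  obtain ⟨hp0, hp1⟩ := hp
  -- positivity facts
  have hout : ∀ y, 0 < outDist P p y := by
    intro y
    have h0 := hPpos 0 y; have h1 := hPpos 1 y
    unfold outDist
    rcases eq_or_lt_of_le hp0 with h | h
    · rw [← h]; simpa using h0
    · nlinarith [mul_nonneg (by linarith : (0:ℝ) ≤ 1 - p) h0.le, mul_pos h h1]
  have hHpos : ∀ (y : 𝒴) (γ : ℝ),
      0 < (1 - p) * P 0 y ^ ((1:ℝ)/(1+γ)) + p * P 1 y ^ ((1:ℝ)/(1+γ)) := by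
    intro y γ
    have h0 := Real.rpow_pos_of_pos (hPpos 0 y) ((1:ℝ)/(1+γ))
    have h1 := Real.rpow_pos_of_pos (hPpos 1 y) ((1:ℝ)/(1+γ))
    rcases eq_or_lt_of_le hp0 with h | h
    · rw [← h]; simpa using h0
    · nlinarith [mul_nonneg (by linarith : (0:ℝ) ≤ 1 - p) h0.le, mul_pos h h1]
  set g : ℝ → ℝ := fun γ => ∑ y : 𝒴, P 0 y ^ ((1 : ℝ) / (1 + γ)) *
    ((1 - p) * P 0 y ^ ((1 : ℝ) / (1 + γ)) + p * P 1 y ^ ((1 : ℝ) / (1 + γ))) ^ γ with hg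
  have hE : ∀ γ, gallagerE0 P p γ = -Real.logb 2 (g γ) := by
    intro γ; rw [gallagerE0, hg]
  have hg0 : g 0 = 1 := by
    rw [hg]
    have h11 : ((1:ℝ)/(1+(0:ℝ))) = 1 := by norm_num
    simp only [h11, Real.rpow_one, Real.rpow_zero, mul_one]
    exact hPsum 0
  -- derivative of a ^ (1/(1+γ)) at 0
  have hu : HasDerivAt (fun γ : ℝ => (1:ℝ)/(1+γ)) (-1) 0 := by
    have h1 : HasDerivAt (fun γ : ℝ => 1 + γ) 1 0 := by
      simpa using (hasDerivAt_id (0:ℝ)).const_add 1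
    have h2 := h1.inv (by norm_num)
    simp only [one_div]
    refine h2.congr_deriv ?_
    norm_num
  have hA : ∀ a : ℝ, 0 < a →
      HasDerivAt (fun γ : ℝ => a ^ ((1:ℝ)/(1+γ))) (-(a * Real.log a)) 0 := by
    intro a ha
    have hc := (Real.hasStrictDerivAt_const_rpow ha ((1:ℝ)/(1+(0:ℝ)))).hasDerivAt
    have h3 := hc.comp 0 hu
    refine h3.congr_deriv ?_
    norm_num [Real.rpow_one]
  -- derivative of the inner bracket
  have hH : ∀ y : 𝒴, HasDerivAt
      (fun γ : ℝ => (1 - p) * P 0 y ^ ((1:ℝ)/(1+γ)) + p * P 1 y ^ ((1:ℝ)/(1+γ)))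
      ((1 - p) * (-(P 0 y * Real.log (P 0 y))) + p * (-(P 1 y * Real.log (P 1 y)))) 0 :=
    fun y => ((hA _ (hPpos 0 y)).const_mul (1 - p)).add ((hA _ (hPpos 1 y)).const_mul p)
  -- derivative of bracket ^ γ at 0 is log (outDist)
  have hB : ∀ y : 𝒴, HasDerivAt
      (fun γ : ℝ => ((1 - p) * P 0 y ^ ((1:ℝ)/(1+γ)) + p * P 1 y ^ ((1:ℝ)/(1+γ))) ^ γ)
      (Real.log (outDist P p y)) 0 := by
    intro y
    have h4 := (hH y).rpow (hasDerivAt_id 0) (hHpos y 0)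
    refine h4.congr_deriv ?_
    have h11 : ((1:ℝ)/(1+(0:ℝ))) = 1 := by norm_num
    simp only [id_eq, h11, Real.rpow_one, Real.rpow_zero, mul_zero, zero_mul, mul_one,
      one_mul, zero_add, outDist]
  -- derivative of each summand
  have hterm : ∀ y : 𝒴, HasDerivAt
      (fun γ : ℝ => P 0 y ^ ((1:ℝ)/(1+γ)) *
        ((1 - p) * P 0 y ^ ((1:ℝ)/(1+γ)) + p * P 1 y ^ ((1:ℝ)/(1+γ))) ^ γ)
      (-(P 0 y * Real.log (P 0 y)) + P 0 y * Real.log (outDist P p y)) 0 := by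
    intro y
    have h5 := (hA _ (hPpos 0 y)).mul (hB y)
    refine h5.congr_deriv ?_
    have h11 : ((1:ℝ)/(1+(0:ℝ))) = 1 := by norm_num
    simp only [h11, Real.rpow_one, Real.rpow_zero, mul_one]
  set D : ℝ := ∑ y : 𝒴, (-(P 0 y * Real.log (P 0 y)) + P 0 y * Real.log (outDist P p y)) with hDdef
  have hgd : HasDerivAt g D 0 := by
    rw [hg, hDdef]
    exact HasDerivAt.fun_sum (fun y _ => hterm y)
  have hlog2pos : (0:ℝ) < Real.log 2 := Real.log_pos (by norm_num)
  have hDval : -(D / Real.log 2) = partialMI0 P p := by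
    rw [partialMI0, hDdef]
    have key : ∀ y : 𝒴, P 0 y * Real.logb 2 (P 0 y / outDist P p y) =
        -((-(P 0 y * Real.log (P 0 y)) + P 0 y * Real.log (outDist P p y)) / Real.log 2) := by
      intro y
      rw [Real.logb, Real.log_div (ne_of_gt (hPpos 0 y)) (ne_of_gt (hout y))]
      field_simp
      ring
    rw [Finset.sum_congr rfl (fun y _ => key y), Finset.sum_div]
    exact (Finset.sum_neg_distrib _).symm
  -- derivative of F at 0
  set F : ℝ → ℝ := fun γ => gallagerE0 P p γ - γ * R with hFdef
  have hFeq : F = fun γ => -(Real.log (g γ) / Real.log 2) - γ * R := by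
    funext γ
    show gallagerE0 P p γ - γ * R = _
    rw [hE γ, Real.logb]
  have hFd : HasDerivAt F (partialMI0 P p - R) 0 := by
    rw [hFeq]
    have hlog : HasDerivAt (fun γ => Real.log (g γ)) D 0 := by
      have := hgd.log (by rw [hg0]; norm_num)
      rwa [hg0, div_one] at this
    have h6 := ((hlog.div_const (Real.log 2)).neg).sub ((hasDerivAt_id (0:ℝ)).mul_const R)
    have h7 : -(D / Real.log 2) - 1 * R = partialMI0 P p - R := by rw [hDval]; ring
    rw [← h7]
    exact h6
  have hF0 : F 0 = 0 := by
    rw [hFdef]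
    simp [hE 0, hg0]
  -- get γ₀ ∈ (0,1) with F γ₀ > 0
  rw [hasDerivAt_iff_tendsto_slope] at hFd
  have hd : 0 < partialMI0 P p - R := by linarith
  have hev : ∀ᶠ γ in nhdsWithin (0:ℝ) {(0:ℝ)}ᶜ, 0 < slope F 0 γ :=
    hFd.eventually (eventually_gt_nhds hd)
  have hev2 : ∀ᶠ γ in nhdsWithin (0:ℝ) (Set.Ioi 0), 0 < slope F 0 γ :=
    hev.filter_mono (nhdsWithin_mono 0 (fun x hx => ne_of_gt hx))
  have hmem : Set.Ioo (0:ℝ) 1 ∈ nhdsWithin (0:ℝ) (Set.Ioi 0) :=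
    Ioo_mem_nhdsGT_of_mem ⟨le_refl 0, by norm_num⟩
  obtain ⟨γ₀, hsl, hγ₀⟩ := (hev2.and (Filter.eventually_of_mem hmem (fun x hx => hx))).exists
  have hFγ₀ : 0 < F γ₀ := by
    have h8 : slope F 0 γ₀ = F γ₀ / γ₀ := by
      rw [slope_def_field, hF0]; ring_nf
    rw [h8] at hsl
    have := mul_pos hsl hγ₀.1
    rwa [div_mul_cancel₀ _ (ne_of_gt hγ₀.1)] at this
  -- boundedness of the image
  have hcont_u : ContinuousOn (fun γ : ℝ => (1:ℝ)/(1+γ)) (Set.Icc 0 1) := by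
    apply ContinuousOn.div continuousOn_const (by fun_prop)
    intro γ hγ
    have := hγ.1; positivity
  have hcontA : ∀ a : ℝ, 0 < a →
      ContinuousOn (fun γ : ℝ => a ^ ((1:ℝ)/(1+γ))) (Set.Icc 0 1) := fun a ha =>
    ContinuousOn.rpow continuousOn_const hcont_u (fun x _ => Or.inl (ne_of_gt ha))
  have hcontB : ∀ y : 𝒴, ContinuousOn
      (fun γ : ℝ => ((1 - p) * P 0 y ^ ((1:ℝ)/(1+γ)) + p * P 1 y ^ ((1:ℝ)/(1+γ))) ^ γ)
      (Set.Icc 0 1) := by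
    intro y
    exact ContinuousOn.rpow
      ((continuousOn_const.mul (hcontA _ (hPpos 0 y))).add
        (continuousOn_const.mul (hcontA _ (hPpos 1 y))))
      continuousOn_id (fun x _ => Or.inl (ne_of_gt (hHpos y x)))
  have hcontg : ContinuousOn g (Set.Icc 0 1) := by
    rw [hg]
    exact continuousOn_finset_sum _ (fun y _ => (hcontA _ (hPpos 0 y)).mul (hcontB y))
  have hgpos : ∀ γ ∈ Set.Icc (0:ℝ) 1, 0 < g γ := by
    intro γ _
    simp only [hg]
    have hne : (Finset.univ : Finset 𝒴).Nonempty := by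
      rcases (Finset.univ : Finset 𝒴).eq_empty_or_nonempty with h | h
      · exfalso
        have := hPsum 0
        rw [h, Finset.sum_empty] at this
        norm_num at this
      · exact h
    refine Finset.sum_pos (fun y _ => ?_) hne
    exact mul_pos (Real.rpow_pos_of_pos (hPpos 0 y) _)
      (Real.rpow_pos_of_pos (hHpos y γ) _)
  have hcontF : ContinuousOn F (Set.Icc 0 1) := by
    rw [hFeq]
    exact (((hcontg.log (fun x hx => ne_of_gt (hgpos x hx))).div_const _).neg).sub
      (by fun_prop)
  have hbdd : BddAbove (F '' Set.Icc 0 1) :=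
    (isCompact_Icc.image_of_continuousOn hcontF).bddAbove
  have hmemF : F γ₀ ∈ F '' Set.Icc 0 1 :=
    ⟨γ₀, ⟨le_of_lt hγ₀.1, le_of_lt hγ₀.2⟩, rfl⟩
  calc (0:ℝ) < F γ₀ := hFγ₀
    _ ≤ partialErrorExponent P p R := le_csSup hbdd (by rw [hFdef] at hmemF; exact hmemF)
end

section
/- For every p ∈ [0,1], E_0(p,0) = 0, and the function γ ↦ E_0(p,γ) is differentiable from the right at γ = 0 with right derivative equal to the partial mutual information I_0(p): ∂E_0(p,γ)/∂γ |_{γ=0} = I_0(p). -/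
open Finset

/-- For every `p ∈ [0,1]`, `E_0(p,0) = 0`, and `γ ↦ E_0(p,γ)` is differentiable from
the right at `γ = 0` with right derivative equal to the partial mutual information
`I_0(p)`. -/
theorem gallagerE0_zero_and_right_deriv
    (𝒴 : Type) [Fintype 𝒴]
    (P : ZMod 2 → 𝒴 → ℝ)
    (hPpos : ∀ x y, 0 < P x y) (hPsum : ∀ x, ∑ y : 𝒴, P x y = 1)
    (p : ℝ) (hp : p ∈ Set.Icc (0 : ℝ) 1) :
    gallagerE0 P p 0 = 0 ∧
    HasDerivWithinAt (fun γ => gallagerE0 P p γ) (partialMI0 P p) (Set.Ici (0 : ℝ)) 0 := by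
  obtain ⟨hp0, hp1⟩ := hp
  set F : ℝ → ℝ := fun γ => ∑ y : 𝒴, P 0 y ^ ((1 : ℝ) / (1 + γ)) *
    ((1 - p) * P 0 y ^ ((1 : ℝ) / (1 + γ)) + p * P 1 y ^ ((1 : ℝ) / (1 + γ))) ^ γ with hFdef
  have hout : ∀ y : 𝒴, 0 < (1 - p) * P 0 y + p * P 1 y := by
    intro y
    rcases eq_or_lt_of_le hp0 with h | h
    · simpa [← h] using hPpos 0 y
    · have h1 : 0 < p * P 1 y := mul_pos h (hPpos 1 y)
      have h2 : 0 ≤ (1 - p) * P 0 y := mul_nonneg (by linarith) (hPpos 0 y).le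
      linarith
  have hF0 : F 0 = 1 := by
    show (∑ y : 𝒴, P 0 y ^ ((1 : ℝ) / (1 + (0:ℝ))) *
      ((1 - p) * P 0 y ^ ((1 : ℝ) / (1 + (0:ℝ))) + p * P 1 y ^ ((1 : ℝ) / (1 + (0:ℝ)))) ^ (0:ℝ)) = 1
    have : ∀ y : 𝒴, P 0 y ^ ((1 : ℝ) / (1 + 0)) *
        ((1 - p) * P 0 y ^ ((1 : ℝ) / (1 + 0)) + p * P 1 y ^ ((1 : ℝ) / (1 + 0))) ^ (0:ℝ)
        = P 0 y := by
      intro y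
      rw [Real.rpow_zero]
      norm_num
    rw [Finset.sum_congr rfl fun y _ => this y, hPsum 0]
  set D : ℝ := ∑ y : 𝒴, (P 0 y * Real.log ((1 - p) * P 0 y + p * P 1 y)
      - P 0 y * Real.log (P 0 y)) with hDdef
  have hderiv : HasDerivAt F D 0 := by
    rw [hFdef, hDdef]
    apply HasDerivAt.fun_sum
    intro y _
    have ha := hPpos 0 y
    have hb := hPpos 1 y
    have hu : HasDerivAt (fun γ : ℝ => (1:ℝ) / (1 + γ)) (-1) 0 := by
      have h1 : HasDerivAt (fun γ : ℝ => 1 + γ) 1 0 := by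
        simpa using (hasDerivAt_id (0:ℝ)).const_add 1
      have := h1.inv (by norm_num)
      simp only [one_div]
      refine this.congr_deriv ?_
      norm_num
    have h10 : (1:ℝ) / (1 + (0:ℝ)) = 1 := by norm_num
    have hca : HasDerivAt (fun γ : ℝ => P 0 y ^ ((1:ℝ)/(1+γ))) (-(P 0 y * Real.log (P 0 y))) 0 := by
      have := ((Real.hasStrictDerivAt_const_rpow ha ((1:ℝ)/(1+0))).hasDerivAt).comp 0 hu
      refine this.congr_deriv ?_
      rw [h10, Real.rpow_one]; ring
    have hcb : HasDerivAt (fun γ : ℝ => P 1 y ^ ((1:ℝ)/(1+γ))) (-(P 1 y * Real.log (P 1 y))) 0 := by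
      have := ((Real.hasStrictDerivAt_const_rpow hb ((1:ℝ)/(1+0))).hasDerivAt).comp 0 hu
      refine this.congr_deriv ?_
      rw [h10, Real.rpow_one]; ring
    have hB : HasDerivAt (fun γ : ℝ => (1 - p) * P 0 y ^ ((1:ℝ)/(1+γ)) + p * P 1 y ^ ((1:ℝ)/(1+γ)))
        ((1 - p) * (-(P 0 y * Real.log (P 0 y))) + p * (-(P 1 y * Real.log (P 1 y)))) 0 :=
      (hca.const_mul _).add (hcb.const_mul _)
    have hBpos : 0 < (1 - p) * P 0 y ^ ((1:ℝ)/(1+(0:ℝ))) + p * P 1 y ^ ((1:ℝ)/(1+(0:ℝ))) := by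
      rw [h10, Real.rpow_one, Real.rpow_one]; exact hout y
    have h3 := hB.rpow (hasDerivAt_id (0:ℝ)) hBpos
    have := hca.mul h3
    refine this.congr_deriv ?_
    simp only [h10, Real.rpow_one, Real.rpow_zero, id_eq]
    ring
  have hFne : F 0 ≠ 0 := by rw [hF0]; norm_num
  have hlog : HasDerivAt (fun γ => Real.log (F γ)) D 0 := by
    have := hderiv.log hFne
    simpa [hF0] using this
  have hE : HasDerivAt (fun γ => gallagerE0 P p γ) (-(D / Real.log 2)) 0 := by
    have := (hlog.div_const (Real.log 2)).neg
    exact this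
  have hMI : partialMI0 P p = -(D / Real.log 2) := by
    have key : partialMI0 P p =
        (∑ y : 𝒴, (P 0 y * Real.log (P 0 y)
          - P 0 y * Real.log ((1 - p) * P 0 y + p * P 1 y))) / Real.log 2 := by
      rw [partialMI0, Finset.sum_div]
      refine Finset.sum_congr rfl fun y _ => ?_
      rw [outDist, Real.logb, Real.log_div (hPpos 0 y).ne' (hout y).ne']
      ring
    rw [key, hDdef, ← neg_div, ← Finset.sum_neg_distrib]
    congr 1
    refine Finset.sum_congr rfl fun y _ => by ring
  constructor
  · rw [gallagerE0]
    have : (∑ y : 𝒴, P 0 y ^ ((1 : ℝ) / (1 + (0:ℝ))) *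
        ((1 - p) * P 0 y ^ ((1 : ℝ) / (1 + (0:ℝ))) + p * P 1 y ^ ((1 : ℝ) / (1 + (0:ℝ)))) ^ (0:ℝ)) = 1 := hF0
    rw [this, Real.logb_one, neg_zero]
  · rw [hMI]
    exact hE.hasDerivWithinAt
end

section
/- The partial mutual information I_0 : [0,1] → ℝ is continuous on [0,1], differentiable on (0,1), and monotonically nondecreasing on [0,1], with I_0(0) = 0. -/
open Finset

lemma outDist_pos {𝒴 : Type} [Fintype 𝒴] {P : ZMod 2 → 𝒴 → ℝ}
    (hPpos : ∀ x y, 0 < P x y) {p : ℝ} (h0 : 0 ≤ p) (h1 : p ≤ 1) (y : 𝒴) :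
    0 < outDist P p y := by
  unfold outDist
  rcases eq_or_lt_of_le h1 with h | h
  · subst h; simpa using hPpos 1 y
  · have h2 : 0 ≤ p * P 1 y := mul_nonneg h0 (hPpos 1 y).le
    have h3 : 0 < (1 - p) * P 0 y := mul_pos (by linarith) (hPpos 0 y)
    linarith

lemma outDist_sum {𝒴 : Type} [Fintype 𝒴] {P : ZMod 2 → 𝒴 → ℝ}
    (hPsum : ∀ x, ∑ y : 𝒴, P x y = 1) (p : ℝ) :
    ∑ y : 𝒴, outDist P p y = 1 := by
  unfold outDist
  rw [Finset.sum_add_distrib, ← Finset.mul_sum, ← Finset.mul_sum, hPsum 0, hPsum 1]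
  ring

/-- The partial mutual information `I_0 : [0,1] → ℝ` is continuous on `[0,1]`,
differentiable on `(0,1)`, and monotonically nondecreasing on `[0,1]`, with
`I_0(0) = 0`. -/
theorem partialMI0_props
    (𝒴 : Type) [Fintype 𝒴]
    (P : ZMod 2 → 𝒴 → ℝ)
    (hPpos : ∀ x y, 0 < P x y) (hPsum : ∀ x, ∑ y : 𝒴, P x y = 1) :
    ContinuousOn (partialMI0 P) (Set.Icc (0 : ℝ) 1) ∧
    DifferentiableOn ℝ (partialMI0 P) (Set.Ioo (0 : ℝ) 1) ∧
    MonotoneOn (partialMI0 P) (Set.Icc (0 : ℝ) 1) ∧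
    partialMI0 P 0 = 0 := by
  have hlog2 : Real.log 2 ≠ 0 := (Real.log_pos (by norm_num)).ne'
  -- continuity
  have hcont : ContinuousOn (partialMI0 P) (Set.Icc (0 : ℝ) 1) := by
    unfold partialMI0 Real.logb
    apply continuousOn_finset_sum
    intro y _
    apply ContinuousOn.mul continuousOn_const
    apply ContinuousOn.div _ continuousOn_const (fun x _ => hlog2)
    apply ContinuousOn.log
    · apply ContinuousOn.div continuousOn_const
      · exact (by unfold outDist; fun_prop : Continuous (fun p => outDist P p y)).continuousOn
      · exact fun p hp => (outDist_pos hPpos hp.1 hp.2 y).ne'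
    · intro p hp
      exact (div_pos (hPpos 0 y) (outDist_pos hPpos hp.1 hp.2 y)).ne'
  have hdiff : DifferentiableOn ℝ (partialMI0 P) (Set.Ioo (0 : ℝ) 1) := by
    unfold partialMI0 Real.logb
    apply DifferentiableOn.fun_sum
    intro y _
    apply DifferentiableOn.mul (differentiableOn_const _)
    apply DifferentiableOn.div _ (differentiableOn_const _) (fun x _ => hlog2)
    apply DifferentiableOn.log
    · apply DifferentiableOn.div (differentiableOn_const _)
      · exact (by unfold outDist; fun_prop : Differentiable ℝ (fun p => outDist P p y)).differentiableOn
      · exact fun p hp => (outDist_pos hPpos hp.1.le hp.2.le y).ne'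
    · intro p hp
      exact (div_pos (hPpos 0 y) (outDist_pos hPpos hp.1.le hp.2.le y)).ne'
  have hzero : partialMI0 P 0 = 0 := by
    unfold partialMI0 outDist
    simp only [one_mul, zero_mul, sub_zero, add_zero]
    have : ∀ y : 𝒴, P 0 y / P 0 y = 1 := fun y => div_self (hPpos 0 y).ne'
    simp [this]
  refine ⟨hcont, hdiff, ?_, hzero⟩
  -- monotonicity
  intro p hp q hq hpq
  have hQppos : ∀ y, 0 < outDist P p y := fun y => outDist_pos hPpos hp.1 hp.2 y
  have hQqpos : ∀ y, 0 < outDist P q y := fun y => outDist_pos hPpos hq.1 hq.2 y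
  -- step 1 : ∑ P0 * (P1 - P0) / Qp ≤ 0
  have hS : ∑ y : 𝒴, P 0 y * (P 1 y - P 0 y) / outDist P p y ≤ 0 := by
    rcases eq_or_lt_of_le hp.1 with h0 | h0
    · have hp0 : p = 0 := h0.symm
      have heq : ∀ y : 𝒴, P 0 y * (P 1 y - P 0 y) / outDist P p y = P 1 y - P 0 y := by
        intro y
        have hQ : outDist P p y = P 0 y := by simp [outDist, hp0]
        rw [hQ, mul_comm, mul_div_assoc, div_self (hPpos 0 y).ne', mul_one]
      rw [Finset.sum_congr rfl (fun y _ => heq y), Finset.sum_sub_distrib, hPsum 0, hPsum 1]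
      norm_num
    · -- p > 0
      have hT : (1 : ℝ) ≤ ∑ y : 𝒴, P 0 y ^ 2 / outDist P p y := by
        have h1 : ∀ y : 𝒴, 2 * P 0 y - outDist P p y ≤ P 0 y ^ 2 / outDist P p y := by
          intro y
          have key : P 0 y ^ 2 / outDist P p y - (2 * P 0 y - outDist P p y)
              = (P 0 y - outDist P p y) ^ 2 / outDist P p y := by
            field_simp [(hQppos y).ne']
            ring
          nlinarith [div_nonneg (sq_nonneg (P 0 y - outDist P p y)) (hQppos y).le]
        calc (1 : ℝ) = ∑ y : 𝒴, (2 * P 0 y - outDist P p y) := by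
              rw [Finset.sum_sub_distrib, ← Finset.mul_sum, hPsum 0, outDist_sum hPsum]
              norm_num
          _ ≤ _ := Finset.sum_le_sum fun y _ => h1 y
      have heq : ∀ y : 𝒴, P 0 y * (P 1 y - P 0 y) / outDist P p y
          = (P 0 y - P 0 y ^ 2 / outDist P p y) / p := by
        intro y
        have h1 : P 1 y - P 0 y = (outDist P p y - P 0 y) / p := by
          have h2 : outDist P p y = P 0 y + p * (P 1 y - P 0 y) := by
            unfold outDist; ring
          rw [h2]
          field_simp
          ring
        rw [h1]
        field_simp [(hQppos y).ne', h0.ne']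
      rw [Finset.sum_congr rfl (fun y _ => heq y), ← Finset.sum_div, Finset.sum_sub_distrib,
        hPsum 0]
      apply div_nonpos_of_nonpos_of_nonneg _ h0.le
      linarith
  -- step 2 : ∑ P0 * Qq / Qp ≤ 1
  have hsum1 : ∑ y : 𝒴, P 0 y * (outDist P q y / outDist P p y) ≤ 1 := by
    have heq : ∀ y : 𝒴, P 0 y * (outDist P q y / outDist P p y)
        = P 0 y + (q - p) * (P 0 y * (P 1 y - P 0 y) / outDist P p y) := by
      intro y
      have hQ : outDist P q y = outDist P p y + (q - p) * (P 1 y - P 0 y) := by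
        unfold outDist; ring
      rw [hQ]
      field_simp [(hQppos y).ne']
    rw [Finset.sum_congr rfl (fun y _ => heq y), Finset.sum_add_distrib, hPsum 0,
      ← Finset.mul_sum]
    nlinarith [hS, sub_nonneg.2 hpq]
  -- step 3 : ∑ P0 * log (Qq/Qp) ≤ 0
  have key : ∑ y : 𝒴, P 0 y * Real.log (outDist P q y / outDist P p y) ≤ 0 := by
    have h1 : ∀ y : 𝒴, P 0 y * Real.log (outDist P q y / outDist P p y)
        ≤ P 0 y * (outDist P q y / outDist P p y - 1) := fun y =>
      mul_le_mul_of_nonneg_left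
        (Real.log_le_sub_one_of_pos (div_pos (hQqpos y) (hQppos y))) (hPpos 0 y).le
    calc ∑ y : 𝒴, P 0 y * Real.log (outDist P q y / outDist P p y)
        ≤ ∑ y : 𝒴, P 0 y * (outDist P q y / outDist P p y - 1) :=
          Finset.sum_le_sum fun y _ => h1 y
      _ = (∑ y : 𝒴, P 0 y * (outDist P q y / outDist P p y)) - ∑ y : 𝒴, P 0 y := by
          rw [← Finset.sum_sub_distrib]
          exact Finset.sum_congr rfl fun y _ => by ring
      _ ≤ 0 := by rw [hPsum 0]; linarith
  -- step 4 : conclude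
  have expand : partialMI0 P p - partialMI0 P q
      = (∑ y : 𝒴, P 0 y * Real.log (outDist P q y / outDist P p y)) / Real.log 2 := by
    unfold partialMI0 Real.logb
    rw [Finset.sum_div, ← Finset.sum_sub_distrib]
    apply Finset.sum_congr rfl
    intro y _
    have hlog : Real.log (P 0 y / outDist P q y)
        = Real.log (P 0 y / outDist P p y)
          - Real.log (outDist P q y / outDist P p y) := by
      rw [Real.log_div (hPpos 0 y).ne' (hQqpos y).ne',
        Real.log_div (hPpos 0 y).ne' (hQppos y).ne',
        Real.log_div (hQqpos y).ne' (hQppos y).ne']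
      ring
    rw [hlog]
    ring
  have hpos2 : 0 < Real.log 2 := Real.log_pos (by norm_num)
  have hn : (∑ y : 𝒴, P 0 y * Real.log (outDist P q y / outDist P p y)) / Real.log 2 ≤ 0 :=
    div_nonpos_of_nonpos_of_nonneg key hpos2.le
  linarith
end
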